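/- arXiv:2103.06176 — 5 statements merged into one kernel-verified Lean document; each statement's English description precedes it below -/
import Mathlib

section
/- For every integer n ≥ 2 and every real number λ, the alternative characteristic polynomial satisfies d_n(λ) = ((−1)^{n−1} / (n · 2^{n−1})) · Σ_{k=1}^{⌈n/2⌉} C(n, 2k−1) · (λ/n − 2)^{n−(2k−1)} · ((λ/n − 2)² − 4)^{k−1}, where C(n,j) denotes the binomial coefficient and ⌈x⌉ is the least integer greater than or equal to x. -/
set_option linter.unreachableTactic false
set_option linter.unusedTactic false
set_option maxHeartbeats 1000000

open Finset

noncomputable section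

/-- The `(n-1) × (n-1)` symmetric matrix `K_n` with entries
`K_n(j,k) = min(j,k)/n − jk/n²` for `1 ≤ j, k ≤ n−1`. -/
def Kmat (n : ℕ) : Matrix (Fin (n - 1)) (Fin (n - 1)) ℝ := fun j k =>
  ((min (j.1 + 1) (k.1 + 1) : ℕ) : ℝ) / n
    - ((j.1 + 1 : ℕ) : ℝ) * ((k.1 + 1 : ℕ) : ℝ) / (n : ℝ) ^ 2

/-- The alternative characteristic polynomial `d_n(λ) = det(I_{n−1} − λ K_n)`. -/
def dpoly (n : ℕ) (lam : ℝ) : ℝ := Matrix.det (1 - lam • Kmat n)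

/-! ### Tridiagonal matrices and the continuant sequence -/

def triM (a : ℝ) (m : ℕ) : Matrix (Fin m) (Fin m) ℝ :=
  Matrix.of fun i j =>
    if (i : ℕ) = j then a else if (i : ℕ) + 1 = j ∨ (j : ℕ) + 1 = i then -1 else 0

def useq (a : ℝ) : ℕ → ℝ
  | 0 => 1
  | 1 => a
  | (m+2) => a * useq a (m+1) - useq a m

lemma sub1 (a : ℝ) (m : ℕ) :
    (triM a (m+2)).submatrix Fin.succ ((0 : Fin (m+2)).succAbove) = triM a (m+1) := by
  ext i j
  simp only [Matrix.submatrix_apply, Fin.zero_succAbove, triM, Matrix.of_apply, Fin.val_succ]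
  split_ifs <;> first | rfl | omega

lemma sub2 (a : ℝ) (m : ℕ) :
    ((triM a (m+2)).submatrix Fin.succ ((1 : Fin (m+2)).succAbove)).submatrix
      ((0 : Fin (m+1)).succAbove) Fin.succ = triM a m := by
  ext i j
  have hv : (((1 : Fin (m+2)).succAbove j.succ) : ℕ) = (j : ℕ) + 2 := by
    simp [Fin.succAbove, Fin.lt_def]
  simp only [Matrix.submatrix_apply, Fin.zero_succAbove, triM, Matrix.of_apply, Fin.val_succ, hv]
  split_ifs <;> first | rfl | omega

lemma det_step (a : ℝ) (m : ℕ) :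
    (triM a (m+2)).det = a * (triM a (m+1)).det - (triM a m).det := by
  rw [Matrix.det_succ_row_zero, Fin.sum_univ_succ, Fin.sum_univ_succ]
  have h00 : triM a (m+2) 0 0 = a := rfl
  have h01 : triM a (m+2) 0 (Fin.succ 0) = -1 := by
    simp only [triM, Matrix.of_apply, Fin.val_succ, Fin.val_zero]
    split_ifs <;> simp_all <;> omega
  have hrest : ∀ j : Fin m, triM a (m+2) 0 j.succ.succ = 0 := by
    intro j
    simp only [triM, Matrix.of_apply, Fin.val_succ, Fin.val_zero]
    split_ifs <;> simp_all <;> omega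
  have hz : ∑ j : Fin m,
      (-1 : ℝ) ^ (((j.succ.succ : Fin (m+2)) : ℕ)) * triM a (m+2) 0 j.succ.succ *
        ((triM a (m+2)).submatrix Fin.succ (Fin.succAbove j.succ.succ)).det = 0 := by
    apply Finset.sum_eq_zero; intro j _; rw [hrest]; ring
  rw [hz, h00, h01, sub1]
  have hsa : (Fin.succ (0 : Fin (m+1))).succAbove = ((1 : Fin (m+2)).succAbove) := by
    rw [Fin.succ_zero_eq_one]
  rw [hsa]
  have hB : ((triM a (m+2)).submatrix Fin.succ ((1 : Fin (m+2)).succAbove)).det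
      = - (triM a m).det := by
    rw [Matrix.det_succ_column_zero, Fin.sum_univ_succ]
    have hB00 : (triM a (m+2)).submatrix Fin.succ ((1 : Fin (m+2)).succAbove) 0 0 = -1 := by
      have hv : (((1 : Fin (m+2)).succAbove 0) : ℕ) = 0 := by
        simp [Fin.succAbove, Fin.lt_def]
      simp only [Matrix.submatrix_apply, triM, Matrix.of_apply, Fin.val_succ, hv, Fin.val_zero]
      split_ifs <;> simp_all <;> omega
    have hBrest : ∀ i : Fin m,
        (triM a (m+2)).submatrix Fin.succ ((1 : Fin (m+2)).succAbove) i.succ 0 = 0 := by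
      intro i
      have hv : (((1 : Fin (m+2)).succAbove 0) : ℕ) = 0 := by
        simp [Fin.succAbove, Fin.lt_def]
      simp only [Matrix.submatrix_apply, triM, Matrix.of_apply, Fin.val_succ, hv]
      split_ifs <;> simp_all <;> omega
    have hz2 : ∑ i : Fin m,
        (-1 : ℝ) ^ ((i.succ : Fin (m+1)) : ℕ) *
          (triM a (m+2)).submatrix Fin.succ ((1 : Fin (m+2)).succAbove) i.succ 0 *
          (((triM a (m+2)).submatrix Fin.succ ((1 : Fin (m+2)).succAbove)).submatrix
            (Fin.succAbove i.succ) Fin.succ).det = 0 := by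
      apply Finset.sum_eq_zero; intro i _; rw [hBrest]; ring
    rw [hz2, hB00, sub2]
    simp
  rw [hB]
  simp
  ring

lemma det_triM (a : ℝ) : ∀ m, (triM a m).det = useq a m := by
  have key : ∀ m, (triM a m).det = useq a m ∧ (triM a (m+1)).det = useq a (m+1) := by
    intro m
    induction m with
    | zero =>
      constructor
      · simp [useq, Matrix.det_isEmpty]
      · rw [Matrix.det_fin_one]; rfl
    | succ k ih =>
      refine ⟨ih.2, ?_⟩
      rw [det_step, ih.1, ih.2]
      show _ = useq a (k+2)
      rw [useq]
  exact fun m => (key m).1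

lemma useq_two : ∀ m, useq 2 m = (m + 1 : ℕ) := by
  have key : ∀ m, useq 2 m = (m + 1 : ℕ) ∧ useq 2 (m+1) = (m + 2 : ℕ) := by
    intro m
    induction m with
    | zero =>
      constructor
      · norm_num [useq]
      · norm_num [useq]
    | succ k ih =>
      refine ⟨ih.2, ?_⟩
      have : useq 2 (k+2) = 2 * useq 2 (k+1) - useq 2 k := by rw [useq]
      rw [this, ih.1, ih.2]
      push_cast
      ring
  exact fun m => (key m).1

/-! ### `T·K = (1/n)·I` -/

lemma TK_mul (n : ℕ) (hn : 2 ≤ n) :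
    triM 2 (n-1) * Kmat n = ((n : ℝ)⁻¹) • (1 : Matrix (Fin (n-1)) (Fin (n-1)) ℝ) := by
  have hn0 : (n : ℝ) ≠ 0 := by positivity
  ext i j
  rw [Matrix.mul_apply, Matrix.smul_apply, Matrix.one_apply]
  set g : ℕ → ℝ := fun v =>
    ((min v (j.1 + 1) : ℕ) : ℝ) / n - (v : ℝ) * ((j.1 + 1 : ℕ) : ℝ) / (n : ℝ) ^ 2 with hg
  have hK : ∀ k : Fin (n-1), Kmat n k j = g (k.1 + 1) := fun k => rfl
  have hterm : ∀ k : Fin (n-1), triM 2 (n-1) i k * Kmat n k j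
      = 2 * ((if (k : ℕ) = (i : ℕ) then (1:ℝ) else 0) * g (k.1+1))
        - ((if (k : ℕ) = (i : ℕ) + 1 then (1:ℝ) else 0) * g (k.1+1))
        - ((if (k : ℕ) + 1 = (i : ℕ) then (1:ℝ) else 0) * g (k.1+1)) := by
    intro k
    rw [hK]
    simp only [triM, Matrix.of_apply]
    split_ifs <;> first | ring1 | (exfalso; omega)
  rw [Finset.sum_congr rfl (fun k _ => hterm k)]
  rw [Finset.sum_sub_distrib, Finset.sum_sub_distrib, ← Finset.mul_sum]
  have hji : (j : ℕ) + 1 ≤ n - 1 := j.isLt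
  have s1 : ∑ k : Fin (n-1), (if (k : ℕ) = (i : ℕ) then (1:ℝ) else 0) * g (k.1+1)
      = g (i.1 + 1) := by
    rw [Finset.sum_eq_single i]
    · simp
    · intro b _ hb
      have : ¬((b : ℕ) = (i : ℕ)) := fun h => hb (Fin.ext h)
      simp [this]
    · simp
  have s2 : ∑ k : Fin (n-1), (if (k : ℕ) = (i : ℕ) + 1 then (1:ℝ) else 0) * g (k.1+1)
      = g (i.1 + 2) := by
    by_cases h : (i : ℕ) + 1 < n - 1
    · rw [Finset.sum_eq_single (⟨i.1+1, h⟩ : Fin (n-1))]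
      · simp
      · intro b _ hb
        have : ¬((b : ℕ) = (i : ℕ) + 1) := fun hh => hb (Fin.ext hh)
        simp [this]
      · simp
    · have hi2 : i.1 + 2 = n := by have := i.isLt; omega
      have hgz : g (i.1 + 2) = 0 := by
        rw [hg]
        simp only
        have hmin : min (i.1+2) (j.1+1) = j.1 + 1 := by omega
        rw [hmin, hi2]
        push_cast
        field_simp
        ring
      rw [hgz]
      apply Finset.sum_eq_zero
      intro k _
      have : ¬((k : ℕ) = (i : ℕ) + 1) := by have := k.isLt; omega
      simp [this]
  have s3 : ∑ k : Fin (n-1), (if (k : ℕ) + 1 = (i : ℕ) then (1:ℝ) else 0) * g (k.1+1)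
      = g i.1 := by
    by_cases h : 0 < (i : ℕ)
    · have hlt : i.1 - 1 < n - 1 := by have := i.isLt; omega
      rw [Finset.sum_eq_single (⟨i.1-1, hlt⟩ : Fin (n-1))]
      · have : (i.1 - 1) + 1 = i.1 := by omega
        simp [this]
      · intro b _ hb
        have : ¬((b : ℕ) + 1 = (i : ℕ)) := by
          intro hh; apply hb; apply Fin.ext; simp; omega
        simp [this]
      · intro h; exact absurd (Finset.mem_univ _) h
    · have hi0 : i.1 = 0 := by omega
      have hgz : g i.1 = 0 := by
        rw [hg, hi0]
        simp
      rw [hgz]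
      apply Finset.sum_eq_zero
      intro k _
      have : ¬((k : ℕ) + 1 = (i : ℕ)) := by omega
      simp [this]
  rw [s1, s2, s3]
  rcases lt_trichotomy (i : ℕ) (j : ℕ) with hlt | heq | hgt
  · have e1 : min (i.1+1) (j.1+1) = i.1+1 := by omega
    have e2 : min (i.1+2) (j.1+1) = i.1+2 := by omega
    have e3 : min i.1 (j.1+1) = i.1 := by omega
    have hij : ¬(i = j) := fun h => by subst h; omega
    rw [hg]; simp only [e1, e2, e3, if_neg hij]
    push_cast
    field_simp
    ring
  · have e1 : min (i.1+1) (j.1+1) = j.1+1 := by omega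
    have e2 : min (i.1+2) (j.1+1) = j.1+1 := by omega
    have e3 : min i.1 (j.1+1) = i.1 := by omega
    have hij : i = j := Fin.ext heq
    rw [hg]; simp only [e1, e2, e3, if_pos hij]
    rw [heq]
    push_cast
    field_simp
    ring
    rw [pow_two, mul_inv_cancel_right₀ hn0]
  · have e1 : min (i.1+1) (j.1+1) = j.1+1 := by omega
    have e2 : min (i.1+2) (j.1+1) = j.1+1 := by omega
    have e3 : min i.1 (j.1+1) = j.1+1 := by omega
    have hij : ¬(i = j) := fun h => by subst h; omega
    rw [hg]; simp only [e1, e2, e3, if_neg hij]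
    push_cast
    field_simp
    ring

/-! ### The combinatorial identity -/

lemma Srec (n M : ℕ) (hM : n + 1 ≤ M) (x : ℝ) :
    ∑ k ∈ range M, ((n+2).choose (2*k+1) : ℝ) * x ^ (n+1-2*k) * (x^2-4) ^ k
      = 2 * x * ∑ k ∈ range M, ((n+1).choose (2*k+1) : ℝ) * x ^ (n-2*k) * (x^2-4) ^ k
        - 4 * ∑ k ∈ range M, (n.choose (2*k+1) : ℝ) * x ^ (n-1-2*k) * (x^2-4) ^ k := by
  obtain ⟨M', rfl⟩ : ∃ M', M = M' + 1 := ⟨M - 1, by omega⟩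
  set y : ℝ := x^2 - 4 with hy
  have lhs_split : ∑ k ∈ range (M'+1), ((n+2).choose (2*k+1) : ℝ) * x ^ (n+1-2*k) * y ^ k
      = (∑ k ∈ range (M'+1), ((n+1).choose (2*k) : ℝ) * x ^ (n+1-2*k) * y ^ k)
        + x * ∑ k ∈ range (M'+1), ((n+1).choose (2*k+1) : ℝ) * x ^ (n-2*k) * y ^ k := by
    rw [Finset.mul_sum, ← Finset.sum_add_distrib]
    apply Finset.sum_congr rfl
    intro k _
    have hp : (n+2).choose (2*k+1) = (n+1).choose (2*k) + (n+1).choose (2*k+1) :=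
      Nat.choose_succ_succ _ _
    rw [hp]
    push_cast
    by_cases hk : 2*k ≤ n
    · have he : n+1-2*k = (n-2*k)+1 := by omega
      rw [he, pow_succ]
      ring
    · have hz : (n+1).choose (2*k+1) = 0 := Nat.choose_eq_zero_of_lt (by omega)
      rw [hz]
      push_cast
      ring
  have first_piece : ∑ k ∈ range (M'+1), ((n+1).choose (2*k) : ℝ) * x ^ (n+1-2*k) * y ^ k
      = x^(n+1) + (∑ k ∈ range M', (n.choose (2*k+1) : ℝ) * x ^ (n-1-2*k) * y ^ (k+1))
          + (∑ k ∈ range M', (n.choose (2*k+2) : ℝ) * x ^ (n-1-2*k) * y ^ (k+1)) := by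
    rw [Finset.sum_range_succ']
    have : ∀ k, ((n+1).choose (2*(k+1)) : ℝ) * x ^ (n+1-2*(k+1)) * y ^ (k+1)
        = (n.choose (2*k+1) : ℝ) * x ^ (n-1-2*k) * y ^ (k+1)
          + (n.choose (2*k+2) : ℝ) * x ^ (n-1-2*k) * y ^ (k+1) := by
      intro k
      have hp : (n+1).choose (2*(k+1)) = n.choose (2*k+1) + n.choose (2*k+2) := by
        have := Nat.choose_succ_succ n (2*k+1)
        simpa [Nat.mul_succ] using this
      have he : n+1-2*(k+1) = n-1-2*k := by omega
      rw [hp, he]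
      push_cast
      ring
    rw [Finset.sum_congr rfl (fun k _ => this k), Finset.sum_add_distrib]
    simp
    ring
  have rhs_split : 2 * x * (∑ k ∈ range (M'+1), ((n+1).choose (2*k+1) : ℝ) * x ^ (n-2*k) * y ^ k)
        - 4 * ∑ k ∈ range (M'+1), (n.choose (2*k+1) : ℝ) * x ^ (n-1-2*k) * y ^ k
      = x * (∑ k ∈ range (M'+1), ((n+1).choose (2*k+1) : ℝ) * x ^ (n-2*k) * y ^ k)
        + ((∑ k ∈ range (M'+1), (n.choose (2*k) : ℝ) * x ^ (n+1-2*k) * y ^ k)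
            + ∑ k ∈ range (M'+1), (n.choose (2*k+1) : ℝ) * x ^ (n-1-2*k) * y ^ (k+1)) := by
    have key : ∀ k, x * (((n+1).choose (2*k+1) : ℝ) * x ^ (n-2*k) * y ^ k)
        - 4 * ((n.choose (2*k+1) : ℝ) * x ^ (n-1-2*k) * y ^ k)
        = (n.choose (2*k) : ℝ) * x ^ (n+1-2*k) * y ^ k
          + (n.choose (2*k+1) : ℝ) * x ^ (n-1-2*k) * y ^ (k+1) := by
      intro k
      have hp : (n+1).choose (2*k+1) = n.choose (2*k) + n.choose (2*k+1) :=
        Nat.choose_succ_succ _ _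
      rw [hp]
      by_cases hk : 2*k+1 ≤ n
      · have he1 : n+1-2*k = (n-2*k)+1 := by omega
        have he2 : n-2*k = (n-1-2*k)+1 := by omega
        rw [he1, he2, hy]
        push_cast
        ring
      · have hz : n.choose (2*k+1) = 0 := Nat.choose_eq_zero_of_lt (by omega)
        by_cases hk2 : 2*k ≤ n
        · have he1 : n+1-2*k = 1 := by omega
          have he2 : n-2*k = 0 := by omega
          rw [hz, he1, he2]
          push_cast
          ring
        · have hz2 : n.choose (2*k) = 0 := Nat.choose_eq_zero_of_lt (by omega)
          rw [hz, hz2]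
          push_cast
          ring
    have : 2 * x * (∑ k ∈ range (M'+1), ((n+1).choose (2*k+1) : ℝ) * x ^ (n-2*k) * y ^ k)
          - 4 * ∑ k ∈ range (M'+1), (n.choose (2*k+1) : ℝ) * x ^ (n-1-2*k) * y ^ k
        = x * (∑ k ∈ range (M'+1), ((n+1).choose (2*k+1) : ℝ) * x ^ (n-2*k) * y ^ k)
          + ∑ k ∈ range (M'+1),
              (x * (((n+1).choose (2*k+1) : ℝ) * x ^ (n-2*k) * y ^ k)
                - 4 * ((n.choose (2*k+1) : ℝ) * x ^ (n-1-2*k) * y ^ k)) := by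
      rw [Finset.sum_sub_distrib, ← Finset.mul_sum, ← Finset.mul_sum]
      ring
    rw [this, Finset.sum_congr rfl (fun k _ => key k), Finset.sum_add_distrib]
  have pieceA : ∑ k ∈ range (M'+1), (n.choose (2*k) : ℝ) * x ^ (n+1-2*k) * y ^ k
      = x^(n+1) + ∑ k ∈ range M', (n.choose (2*k+2) : ℝ) * x ^ (n-1-2*k) * y ^ (k+1) := by
    rw [Finset.sum_range_succ']
    have : ∀ k, (n.choose (2*(k+1)) : ℝ) * x ^ (n+1-2*(k+1)) * y ^ (k+1)
        = (n.choose (2*k+2) : ℝ) * x ^ (n-1-2*k) * y ^ (k+1) := by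
      intro k
      have he : n+1-2*(k+1) = n-1-2*k := by omega
      have hc : 2*(k+1) = 2*k+2 := by ring
      rw [he, hc]
    rw [Finset.sum_congr rfl (fun k _ => this k)]
    simp
    ring
  have pieceB : ∑ k ∈ range (M'+1), (n.choose (2*k+1) : ℝ) * x ^ (n-1-2*k) * y ^ (k+1)
      = ∑ k ∈ range M', (n.choose (2*k+1) : ℝ) * x ^ (n-1-2*k) * y ^ (k+1) := by
    rw [Finset.sum_range_succ]
    have hz : n.choose (2*M'+1) = 0 := Nat.choose_eq_zero_of_lt (by omega)
    rw [hz]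
    push_cast
    ring
  rw [lhs_split, first_piece, rhs_split, pieceA, pieceB]
  ring

lemma S_useq : ∀ n, ∀ M x, n + 1 ≤ M →
    ∑ k ∈ range M, ((n+1).choose (2*k+1) : ℝ) * x ^ (n-2*k) * (x^2-4) ^ k
      = (-2 : ℝ)^n * useq (-x) n := by
  have key : ∀ n, (∀ M x, n + 1 ≤ M →
      ∑ k ∈ range M, ((n+1).choose (2*k+1) : ℝ) * x ^ (n-2*k) * (x^2-4) ^ k
        = (-2 : ℝ)^n * useq (-x) n)
    ∧ (∀ M x, n + 2 ≤ M →
      ∑ k ∈ range M, ((n+2).choose (2*k+1) : ℝ) * x ^ (n+1-2*k) * (x^2-4) ^ k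
        = (-2 : ℝ)^(n+1) * useq (-x) (n+1)) := by
    intro n
    induction n with
    | zero =>
      constructor
      · intro M x hM
        rw [Finset.sum_eq_single 0]
        · simp [useq]
        · intro k _ hk
          have : Nat.choose 1 (2*k+1) = 0 := Nat.choose_eq_zero_of_lt (by omega)
          rw [this]; push_cast; ring
        · intro h; exact absurd (by simp; omega : (0:ℕ) ∈ range M) h
      · intro M x hM
        rw [Finset.sum_eq_single 0]
        · simp [useq]
        · intro k _ hk
          have : Nat.choose 2 (2*k+1) = 0 := Nat.choose_eq_zero_of_lt (by omega)
          rw [this]; push_cast; ring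
        · intro h; exact absurd (by simp; omega : (0:ℕ) ∈ range M) h
    | succ m ih =>
      refine ⟨ih.2, ?_⟩
      intro M x hM
      rw [Srec (m+1) M (by omega) x]
      simp only [Nat.add_sub_cancel]
      rw [ih.2 M x (by omega), ih.1 M x (by omega)]
      have : useq (-x) (m+2) = (-x) * useq (-x) (m+1) - useq (-x) m := by rw [useq]
      rw [this]
      ring
  exact fun n => (key n).1

lemma Icc_to_range (n : ℕ) (hn : 2 ≤ n) (x : ℝ) :
    ∑ k ∈ Finset.Icc 1 ((n + 1) / 2),
        (n.choose (2 * k - 1) : ℝ) * x ^ (n - (2 * k - 1)) * (x ^ 2 - 4) ^ (k - 1)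
      = ∑ k ∈ range n, (n.choose (2*k+1) : ℝ) * x ^ ((n-1)-2*k) * (x^2-4) ^ k := by
  rw [← Finset.Ico_add_one_right_eq_Icc, Finset.sum_Ico_eq_sum_range]
  have h1 : (n+1)/2 + 1 - 1 = (n+1)/2 := by omega
  rw [h1]
  have hterm : ∀ k, (n.choose (2 * (1+k) - 1) : ℝ) * x ^ (n - (2 * (1+k) - 1))
        * (x ^ 2 - 4) ^ ((1+k) - 1)
      = (n.choose (2*k+1) : ℝ) * x ^ ((n-1)-2*k) * (x^2-4) ^ k := by
    intro k
    have e1 : 2 * (1+k) - 1 = 2*k+1 := by omega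
    have e2 : n - (2*k+1) = (n-1) - 2*k := by omega
    have e3 : (1+k) - 1 = k := by omega
    rw [e1, e2, e3]
  rw [Finset.sum_congr rfl (fun k _ => hterm k)]
  apply Finset.sum_subset
  · intro k hk
    simp only [Finset.mem_range] at *
    omega
  · intro k _ hk
    simp only [Finset.mem_range, not_lt] at hk
    have : n.choose (2*k+1) = 0 := Nat.choose_eq_zero_of_lt (by omega)
    rw [this]
    push_cast
    ring

/-! ### Main theorem -/

/-- Explicit formula for the alternative characteristic polynomial `d_n`. -/
theorem dpoly_explicit_formula (n : ℕ) (hn : 2 ≤ n) (lam : ℝ) :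
    dpoly n lam
      = ((-1 : ℝ) ^ (n - 1) / ((n : ℝ) * 2 ^ (n - 1))) *
          ∑ k ∈ Finset.Icc 1 ((n + 1) / 2),
            (n.choose (2 * k - 1) : ℝ) * (lam / n - 2) ^ (n - (2 * k - 1)) *
              ((lam / n - 2) ^ 2 - 4) ^ (k - 1) := by
  have hn0 : (n : ℝ) ≠ 0 := by positivity
  set x : ℝ := lam / n - 2 with hx
  -- step 1: dpoly n lam = useq (2 - lam/n) (n-1) / n
  have hTprod : triM 2 (n-1) * (1 - lam • Kmat n) = triM (2 - lam/n) (n-1) := by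
    rw [Matrix.mul_sub, Matrix.mul_one, Matrix.mul_smul, TK_mul n hn]
    ext i j
    simp only [Matrix.sub_apply, Matrix.smul_apply, Matrix.one_apply, triM, Matrix.of_apply,
      smul_eq_mul]
    by_cases h : i = j
    · subst h
      simp
      ring
    · have h' : ¬((i : ℕ) = (j : ℕ)) := fun hh => h (Fin.ext hh)
      simp [h, h']
  have hdetT : (triM 2 (n-1)).det = (n : ℝ) := by
    rw [det_triM, useq_two]
    have : (n - 1) + 1 = n := by omega
    rw [this]
  have hdet : (triM 2 (n-1)).det * dpoly n lam = useq (2 - lam/n) (n-1) := by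
    rw [dpoly, ← Matrix.det_mul, hTprod, det_triM]
  rw [hdetT] at hdet
  -- step 2: the sum
  have hsum : ∑ k ∈ Finset.Icc 1 ((n + 1) / 2),
        (n.choose (2 * k - 1) : ℝ) * x ^ (n - (2 * k - 1)) * (x ^ 2 - 4) ^ (k - 1)
      = (-2 : ℝ)^(n-1) * useq (-x) (n-1) := by
    rw [Icc_to_range n hn x]
    have hgoal := S_useq (n-1) n x (by omega)
    have hc : (n-1) + 1 = n := by omega
    rw [hc] at hgoal
    exact hgoal
  have hmx : -x = 2 - lam/n := by rw [hx]; ring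
  have hd : dpoly n lam = useq (2 - lam/n) (n-1) / n := by
    rw [← hdet]; field_simp
  rw [hd, hsum, hmx]
  have hneg2 : ((-2 : ℝ))^(n-1) = (-1 : ℝ)^(n-1) * 2^(n-1) := by
    rw [← mul_pow]; norm_num
  have hsq : ((-1 : ℝ)^(n-1))^2 = 1 := by
    rw [← pow_mul, mul_comm, pow_mul]
    norm_num
  have h2 : (2 : ℝ) ^ (n-1) ≠ 0 := by positivity
  rw [hneg2]
  set u : ℝ := useq (2 - lam/↑n) (n-1) with hu
  field_simp
  linear_combination (-u) * hsq

end
end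

section
/- For every integer n ≥ 2 and every integer m ≥ 1, the m-th moment of the empirical correlation satisfies E[θ_n^m] = ((−1)^m / (2^m · Γ(m/2)²)) · ∫₀^∞ ∫₀^∞ s11^{m/2 − 1} · s22^{m/2 − 1} · g_m(s11, s22) ds11 ds22, where g_m(s11, s22) denotes the m-th derivative of the function s12 ↦ φ_n(s11, s12, s22) evaluated at s12 = 0. -/
open MeasureTheory ProbabilityTheory Finset

noncomputable section

/-- Partial sum `x_1 + ⋯ + x_i`. -/
def psum (x : ℕ → ℝ) (i : ℕ) : ℝ := ∑ j ∈ Finset.Icc 1 i, x j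

/-- The empirical covariance of the partial-sum sequences of `x` and `y` built from
their first `n` terms: `(1/n) Σ S_i T_i − (1/n²) (Σ S_i)(Σ T_i)`. -/
def Zbil (n : ℕ) (x y : ℕ → ℝ) : ℝ :=
  (1 / (n : ℝ)) * ∑ i ∈ Finset.Icc 1 n, psum x i * psum y i
    - (1 / (n : ℝ) ^ 2) * (∑ i ∈ Finset.Icc 1 n, psum x i) *
        (∑ i ∈ Finset.Icc 1 n, psum y i)

variable {Ω : Type*} [MeasurableSpace Ω]

/-- The joint moment generating function
`φ_n(s11, s12, s22) = E[exp(−(1/2)(s11 Z11 + 2 s12 Z12 + s22 Z22))]`. -/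
def phiN (μ : Measure Ω) (X Y : ℕ → Ω → ℝ) (n : ℕ) (s11 s12 s22 : ℝ) : ℝ :=
  ∫ ω, Real.exp (-(1 / 2) *
      (s11 * Zbil n (fun i => X i ω) (fun i => X i ω)
        + 2 * s12 * Zbil n (fun i => X i ω) (fun i => Y i ω)
        + s22 * Zbil n (fun i => Y i ω) (fun i => Y i ω))) ∂μ

/-- The empirical correlation `θ_n` of the two random walks. -/
def thetaN (X Y : ℕ → Ω → ℝ) (n : ℕ) (ω : Ω) : ℝ :=
  Zbil n (fun i => X i ω) (fun i => Y i ω) /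
    Real.sqrt (Zbil n (fun i => X i ω) (fun i => X i ω) *
      Zbil n (fun i => Y i ω) (fun i => Y i ω))

section AuxLemmas

lemma Zbil_centered {n : ℕ} (hn : n ≠ 0) (x y : ℕ → ℝ) :
    Zbil n x y = (1/(n:ℝ)) * ∑ i ∈ Finset.Icc 1 n,
      (psum x i - (∑ j ∈ Finset.Icc 1 n, psum x j)/n) *
      (psum y i - (∑ j ∈ Finset.Icc 1 n, psum y j)/n) := by
  have hn' : (n:ℝ) ≠ 0 := Nat.cast_ne_zero.mpr hn
  have hcard : ((Finset.Icc 1 n).card : ℝ) = n := by simp [Nat.card_Icc]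
  set a := (∑ j ∈ Finset.Icc 1 n, psum x j)/(n:ℝ) with ha
  set b := (∑ j ∈ Finset.Icc 1 n, psum y j)/(n:ℝ) with hb
  have key : ∑ i ∈ Finset.Icc 1 n, (psum x i - a) * (psum y i - b)
      = (∑ i ∈ Finset.Icc 1 n, psum x i * psum y i)
        - a * (∑ i ∈ Finset.Icc 1 n, psum y i)
        - b * (∑ i ∈ Finset.Icc 1 n, psum x i)
        + ((Finset.Icc 1 n).card : ℝ) * (a * b) := by
    rw [Finset.sum_congr rfl (fun i _ => by ring :
      ∀ i ∈ Finset.Icc 1 n, (psum x i - a) * (psum y i - b)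
        = psum x i * psum y i - a * psum y i - b * psum x i + a * b)]
    simp [Finset.sum_add_distrib, Finset.sum_sub_distrib, Finset.mul_sum, Finset.sum_const,
      nsmul_eq_mul]
  rw [key, hcard, Zbil, ha, hb]
  field_simp
  ring

lemma Zbil_self_nonneg {n : ℕ} (hn : n ≠ 0) (x : ℕ → ℝ) : 0 ≤ Zbil n x x := by
  rw [Zbil_centered hn]
  exact mul_nonneg (by positivity) (Finset.sum_nonneg fun i _ => mul_self_nonneg _)

lemma Zbil_sq_le {n : ℕ} (hn : n ≠ 0) (x y : ℕ → ℝ) :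
    (Zbil n x y) ^ 2 ≤ Zbil n x x * Zbil n y y := by
  rw [Zbil_centered hn x y, Zbil_centered hn x x, Zbil_centered hn y y]
  have hs := Finset.sum_mul_sq_le_sq_mul_sq (Finset.Icc 1 n)
    (fun i => psum x i - (∑ j ∈ Finset.Icc 1 n, psum x j)/n)
    (fun i => psum y i - (∑ j ∈ Finset.Icc 1 n, psum y j)/n)
  have hn' : (0:ℝ) < n := by positivity
  calc ((1/(n:ℝ)) * ∑ i ∈ Finset.Icc 1 n, _) ^ 2
      = (1/(n:ℝ))^2 * (∑ i ∈ Finset.Icc 1 n,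
          (psum x i - (∑ j ∈ Finset.Icc 1 n, psum x j)/n) *
          (psum y i - (∑ j ∈ Finset.Icc 1 n, psum y j)/n))^2 := by ring
    _ ≤ (1/(n:ℝ))^2 * ((∑ i ∈ Finset.Icc 1 n,
          (psum x i - (∑ j ∈ Finset.Icc 1 n, psum x j)/n)^2) *
        (∑ i ∈ Finset.Icc 1 n, (psum y i - (∑ j ∈ Finset.Icc 1 n, psum y j)/n)^2)) := by
        exact mul_le_mul_of_nonneg_left hs (by positivity)
    _ = _ := by simp only [sq]; ring

lemma abs_Zbil_le_sqrt {n : ℕ} (hn : n ≠ 0) (x y : ℕ → ℝ) :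
    |Zbil n x y| ≤ Real.sqrt (Zbil n x x * Zbil n y y) := by
  rw [← Real.sqrt_sq_eq_abs]
  exact Real.sqrt_le_sqrt (Zbil_sq_le hn x y)

lemma abs_Zbil_le_half {n : ℕ} (hn : n ≠ 0) (x y : ℕ → ℝ) :
    |Zbil n x y| ≤ (Zbil n x x + Zbil n y y) / 2 := by
  refine (abs_Zbil_le_sqrt hn x y).trans ?_
  have h1 := Zbil_self_nonneg hn x
  have h2 := Zbil_self_nonneg hn y
  have h3 : Zbil n x x * Zbil n y y ≤ ((Zbil n x x + Zbil n y y)/2)^2 := by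
    nlinarith [sq_nonneg (Zbil n x x - Zbil n y y)]
  calc Real.sqrt (Zbil n x x * Zbil n y y)
      ≤ Real.sqrt (((Zbil n x x + Zbil n y y)/2)^2) := Real.sqrt_le_sqrt h3
    _ = (Zbil n x x + Zbil n y y)/2 := Real.sqrt_sq (by positivity)

lemma Zbil_self_pos {n : ℕ} (hn : 2 ≤ n) {x : ℕ → ℝ} (hx : x 2 ≠ 0) :
    0 < Zbil n x x := by
  have hn0 : n ≠ 0 := by omega
  rcases lt_or_eq_of_le (Zbil_self_nonneg hn0 x) with h | h
  · exact h
  exfalso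
  rw [Zbil_centered hn0] at h
  have hn' : (0:ℝ) < n := by positivity
  have hsum : ∑ i ∈ Finset.Icc 1 n,
      (psum x i - (∑ j ∈ Finset.Icc 1 n, psum x j)/n) *
      (psum x i - (∑ j ∈ Finset.Icc 1 n, psum x j)/n) = 0 := by
    rcases mul_eq_zero.mp h.symm with h' | h'
    · exact absurd h' (by positivity)
    · exact h'
  have hzero := (Finset.sum_eq_zero_iff_of_nonneg
    (fun i _ => mul_self_nonneg _)).mp hsum
  have h1 : psum x 1 = (∑ j ∈ Finset.Icc 1 n, psum x j)/n := by
    have := hzero 1 (Finset.mem_Icc.mpr ⟨le_refl 1, by omega⟩)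
    have := mul_self_eq_zero.mp this
    linarith [sub_eq_zero.mp this]
  have h2 : psum x 2 = (∑ j ∈ Finset.Icc 1 n, psum x j)/n := by
    have := hzero 2 (Finset.mem_Icc.mpr ⟨by omega, hn⟩)
    have := mul_self_eq_zero.mp this
    linarith [sub_eq_zero.mp this]
  apply hx
  have : psum x 2 - psum x 1 = x 2 := by
    simp [psum, Finset.sum_Icc_succ_top (by omega : 1 ≤ 2)]
  rw [← this, h1, h2, sub_self]

lemma measurable_Zbil (n : ℕ) {X Y : ℕ → Ω → ℝ}
    (hXm : ∀ i, Measurable (X i)) (hYm : ∀ i, Measurable (Y i)) :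
    Measurable fun ω => Zbil n (fun i => X i ω) (fun i => Y i ω) := by
  have hp : ∀ (Z : ℕ → Ω → ℝ), (∀ i, Measurable (Z i)) → ∀ i,
      Measurable fun ω => psum (fun j => Z j ω) i := fun Z hZ i => by
    unfold psum; exact Finset.measurable_sum _ fun j _ => hZ j
  unfold Zbil
  exact ((measurable_const.mul (Finset.measurable_sum _ fun i _ =>
      (hp X hXm i).mul (hp Y hYm i))).sub
    (((measurable_const.mul (Finset.measurable_sum _ fun i _ => hp X hXm i)).mul
      (Finset.measurable_sum _ fun i _ => hp Y hYm i))))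

lemma ae_ne_zero {μ : Measure Ω} {W : Ω → ℝ} (hWm : Measurable W)
    (hW : Measure.map W μ = gaussianReal 0 1) : ∀ᵐ ω ∂μ, W ω ≠ 0 := by
  have h0 : μ (W ⁻¹' {0}) = 0 := by
    rw [← Measure.map_apply hWm (measurableSet_singleton 0), hW]
    exact gaussianReal_absolutelyContinuous 0 one_ne_zero Real.volume_singleton
  filter_upwards [measure_eq_zero_iff_ae_notMem.mp h0] with ω h using h

lemma bound_aux {A B C δ s s11 s22 : ℝ} (k : ℕ) (hA : 0 ≤ A) (hB : 0 ≤ B)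
    (hC : |C| ≤ (A+B)/2) (hδ : 0 < δ) (hs : |s| ≤ δ) (h1 : 2*δ ≤ s11) (h2 : 2*δ ≤ s22) :
    |(-C)^k * Real.exp (-(1/2) * (s11*A + 2*s*C + s22*B))| ≤ (k.factorial : ℝ) / δ^k := by
  set u := (A+B)/2 with hu
  have hu0 : 0 ≤ u := by positivity
  have habs : |(-C)^k| ≤ u^k := by
    rw [abs_pow, abs_neg]; exact pow_le_pow_left₀ (abs_nonneg C) hC k
  have hsC : -(2*(δ*u)) ≤ 2*s*C := by
    have h' : |2*s*C| ≤ 2*(δ*u) := by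
      rw [abs_mul, abs_mul, abs_two]
      have : |s| * |C| ≤ δ * u := mul_le_mul hs hC (abs_nonneg C) hδ.le
      nlinarith [abs_nonneg C, abs_nonneg s]
    linarith [neg_abs_le (2*s*C)]
  have hexp : Real.exp (-(1/2) * (s11*A + 2*s*C + s22*B)) ≤ Real.exp (-(δ*u)) := by
    apply Real.exp_le_exp.mpr
    have hA' : 2*δ*A ≤ s11*A := mul_le_mul_of_nonneg_right h1 hA
    have hB' : 2*δ*B ≤ s22*B := mul_le_mul_of_nonneg_right h2 hB
    nlinarith
  have hkey : (δ*u)^k / (k.factorial : ℝ) ≤ Real.exp (δ*u) :=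
    Real.pow_div_factorial_le_exp _ (by positivity) k
  have hfac : (0:ℝ) < (k.factorial : ℝ) := by exact_mod_cast k.factorial_pos
  calc |(-C)^k * Real.exp (-(1/2) * (s11*A + 2*s*C + s22*B))|
      = |(-C)^k| * Real.exp (-(1/2) * (s11*A + 2*s*C + s22*B)) := by
        rw [abs_mul, abs_of_pos (Real.exp_pos _)]
    _ ≤ u^k * Real.exp (-(δ*u)) := by
        exact mul_le_mul habs hexp (Real.exp_pos _).le (by positivity)
    _ ≤ (k.factorial : ℝ) / δ^k := by
        rw [le_div_iff₀ (by positivity : (0:ℝ) < δ^k)]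
        have h3 : u ^ k * Real.exp (-(δ * u)) * δ ^ k
            = (δ*u)^k * Real.exp (-(δ*u)) := by rw [mul_pow]; ring
        rw [h3]
        have h4 : (δ*u)^k ≤ (k.factorial : ℝ) * Real.exp (δ*u) := by
          rw [div_le_iff₀ hfac] at hkey; linarith [hkey]
        calc (δ*u)^k * Real.exp (-(δ*u))
            ≤ ((k.factorial : ℝ) * Real.exp (δ*u)) * Real.exp (-(δ*u)) := by
              exact mul_le_mul_of_nonneg_right h4 (Real.exp_pos _).le
          _ = (k.factorial : ℝ) := by
              rw [mul_assoc, ← Real.exp_add]; simp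

variable {Ω : Type*} [MeasurableSpace Ω]

lemma hasDerivAt_G (μ : Measure Ω) [IsProbabilityMeasure μ] {A B C : Ω → ℝ}
    (hAm : Measurable A) (hBm : Measurable B) (hCm : Measurable C)
    (hA : ∀ ω, 0 ≤ A ω) (hB : ∀ ω, 0 ≤ B ω) (hC : ∀ ω, |C ω| ≤ (A ω + B ω)/2)
    {s11 s22 δ : ℝ} (hδ : 0 < δ) (h1 : 2*δ ≤ s11) (h2 : 2*δ ≤ s22) (k : ℕ)
    {s₀ : ℝ} (hs₀ : |s₀| < δ) :
    HasDerivAt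
      (fun s => ∫ ω, (-C ω)^k * Real.exp (-(1/2) * (s11*A ω + 2*s*C ω + s22*B ω)) ∂μ)
      (∫ ω, (-C ω)^(k+1) * Real.exp (-(1/2) * (s11*A ω + 2*s₀*C ω + s22*B ω)) ∂μ) s₀ := by
  set F : ℝ → Ω → ℝ :=
    fun s ω => (-C ω)^k * Real.exp (-(1/2) * (s11*A ω + 2*s*C ω + s22*B ω)) with hF
  set F' : ℝ → Ω → ℝ :=
    fun s ω => (-C ω)^(k+1) * Real.exp (-(1/2) * (s11*A ω + 2*s*C ω + s22*B ω)) with hF'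
  have hmeas : ∀ (j : ℕ) (s : ℝ), Measurable fun ω =>
      (-C ω)^j * Real.exp (-(1/2) * (s11*A ω + 2*s*C ω + s22*B ω)) := by
    intro j s
    exact (hCm.neg.pow_const j).mul
      ((((hAm.const_mul s11).add (hCm.const_mul (2*s))).add (hBm.const_mul s22)).const_mul
        (-(1/2))).exp
  have hε : 0 < δ - |s₀| := by linarith
  have hball : ∀ x ∈ Metric.ball s₀ (δ - |s₀|), |x| ≤ δ := by
    intro x hx
    rw [Metric.mem_ball, Real.dist_eq] at hx
    calc |x| = |(x - s₀) + s₀| := by ring_nf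
      _ ≤ |x - s₀| + |s₀| := abs_add_le _ _
      _ ≤ δ := by linarith
  have hres := hasDerivAt_integral_of_dominated_loc_of_deriv_le (μ := μ) (F := F) (F' := F')
    (bound := fun _ => ((k+1).factorial : ℝ) / δ^(k+1)) (Metric.ball_mem_nhds s₀ hε)
    (Filter.Eventually.of_forall fun s => (hmeas k s).aestronglyMeasurable)
    ?_ ((hmeas (k+1) s₀).aestronglyMeasurable) ?_ (integrable_const _) ?_
  · exact hres.2
  · -- Integrable (F s₀)
    refine Integrable.mono' (integrable_const ((k.factorial : ℝ) / δ^k))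
      (hmeas k s₀).aestronglyMeasurable (Filter.Eventually.of_forall fun ω => ?_)
    rw [Real.norm_eq_abs]
    exact bound_aux k (hA ω) (hB ω) (hC ω) hδ hs₀.le h1 h2
  · -- bound
    refine Filter.Eventually.of_forall fun ω => fun x hx => ?_
    rw [Real.norm_eq_abs]
    exact bound_aux (k+1) (hA ω) (hB ω) (hC ω) hδ (hball x hx) h1 h2
  · -- differentiability
    refine Filter.Eventually.of_forall fun ω => fun x _ => ?_
    have h0 : HasDerivAt (fun s : ℝ => 2*s*C ω) (2*C ω) x := by
      simpa [mul_assoc] using (hasDerivAt_mul_const (C ω)).const_mul (2:ℝ)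
    have hlin : HasDerivAt (fun s : ℝ => s11*A ω + 2*s*C ω + s22*B ω) (2*C ω) x :=
      (h0.const_add (s11*A ω)).add_const (s22*B ω)
    have hinner : HasDerivAt
        (fun s : ℝ => -(1/2) * (s11*A ω + 2*s*C ω + s22*B ω)) (-C ω) x := by
      simpa using hlin.const_mul (-(1/2) : ℝ)
    have hexp := hinner.exp
    have := hexp.const_mul ((-C ω)^k)
    convert this using 1
    · rfl
    simp only [F', pow_succ]; ring

lemma iteratedDeriv_G (μ : Measure Ω) [IsProbabilityMeasure μ] {A B C : Ω → ℝ}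
    (hAm : Measurable A) (hBm : Measurable B) (hCm : Measurable C)
    (hA : ∀ ω, 0 ≤ A ω) (hB : ∀ ω, 0 ≤ B ω) (hC : ∀ ω, |C ω| ≤ (A ω + B ω)/2)
    {s11 s22 δ : ℝ} (hδ : 0 < δ) (h1 : 2*δ ≤ s11) (h2 : 2*δ ≤ s22) (k : ℕ) :
    ∀ s : ℝ, |s| < δ →
      iteratedDeriv k
        (fun s => ∫ ω, Real.exp (-(1/2) * (s11*A ω + 2*s*C ω + s22*B ω)) ∂μ) s
      = ∫ ω, (-C ω)^k * Real.exp (-(1/2) * (s11*A ω + 2*s*C ω + s22*B ω)) ∂μ := by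
  induction k with
  | zero => intro s _; simp [iteratedDeriv_zero]
  | succ k ih =>
    intro s hs
    rw [iteratedDeriv_succ]
    have hsball : s ∈ Metric.ball (0:ℝ) δ := by
      rwa [Metric.mem_ball, Real.dist_eq, sub_zero]
    have hev : iteratedDeriv k
        (fun s => ∫ ω, Real.exp (-(1/2) * (s11*A ω + 2*s*C ω + s22*B ω)) ∂μ)
        =ᶠ[nhds s]
        fun t => ∫ ω, (-C ω)^k * Real.exp (-(1/2) * (s11*A ω + 2*t*C ω + s22*B ω)) ∂μ := by
      refine Filter.eventuallyEq_of_mem (Metric.isOpen_ball.mem_nhds hsball) fun t ht => ?_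
      rw [Metric.mem_ball, Real.dist_eq, sub_zero] at ht
      exact ih t ht
    rw [hev.deriv_eq]
    exact (hasDerivAt_G μ hAm hBm hCm hA hB hC hδ h1 h2 k hs).deriv

lemma gval {a c : ℝ} (ha : 0 < a) (hc : 0 < c) :
    ∫ t in Set.Ioi (0:ℝ), t ^ (c-1) * Real.exp (-(a/2) * t) = (2/a)^c * Real.Gamma c := by
  have h := Real.integral_rpow_mul_exp_neg_mul_Ioi hc (show 0 < a/2 by positivity)
  have h2 : ∀ t : ℝ, Real.exp (-(a/2 * t)) = Real.exp (-(a/2) * t) := by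
    intro t; rw [neg_mul]
  simp_rw [h2] at h
  rw [h]
  congr 1
  congr 1
  field_simp

lemma gint {a c : ℝ} (ha : 0 < a) (hc : 0 < c) :
    IntegrableOn (fun t : ℝ => t ^ (c-1) * Real.exp (-(a/2) * t)) (Set.Ioi 0) := by
  have h := integrableOn_rpow_mul_exp_neg_mul_rpow
    (by linarith : (-1:ℝ) < c-1) one_pos (show 0 < a/2 by positivity)
  refine h.congr_fun (fun t ht => ?_) measurableSet_Ioi
  simp only [Real.rpow_one]

lemma sqrt_pow_eq {A B : ℝ} (hAB : 0 ≤ A * B) (m : ℕ) :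
    (Real.sqrt (A*B))^m = (A*B) ^ ((m:ℝ)/2) := by
  rw [Real.sqrt_eq_rpow, ← Real.rpow_natCast ((A*B) ^ ((1:ℝ)/2)) m, ← Real.rpow_mul hAB]
  congr 1; ring

lemma two_div_rpow_mul {A B : ℝ} (hA : 0 < A) (hB : 0 < B) (m : ℕ) :
    ((2:ℝ)/A) ^ ((m:ℝ)/2) * ((2:ℝ)/B) ^ ((m:ℝ)/2)
      = 2^m / (A*B) ^ ((m:ℝ)/2) := by
  rw [Real.div_rpow (by norm_num) hA.le, Real.div_rpow (by norm_num) hB.le,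
    div_mul_div_comm, ← Real.mul_rpow hA.le hB.le]
  congr 1
  rw [← Real.rpow_natCast 2 m, ← Real.rpow_add (by norm_num : (0:ℝ) < 2)]
  congr 1; ring

/-- The auxiliary kernel function. -/
def Wfun (A B C : Ω → ℝ) (m : ℕ) (c : ℝ) : Ω × (ℝ × ℝ) → ℝ := fun q =>
  ((-C q.1)^m * (q.2.1 ^ (c-1) * Real.exp (-(A q.1/2) * q.2.1)))
    * (q.2.2 ^ (c-1) * Real.exp (-(B q.1/2) * q.2.2))

lemma prod_int_val {K a b c : ℝ} (ha : 0 < a) (hb : 0 < b) (hc : 0 < c) :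
    (∫ p : ℝ × ℝ, (K * (p.1 ^ (c-1) * Real.exp (-(a/2) * p.1)))
        * (p.2 ^ (c-1) * Real.exp (-(b/2) * p.2))
      ∂((volume.restrict (Set.Ioi 0)).prod (volume.restrict (Set.Ioi 0))))
      = (K * ((2/a)^c * Real.Gamma c)) * ((2/b)^c * Real.Gamma c) := by
  calc (∫ p : ℝ × ℝ, (K * (p.1 ^ (c-1) * Real.exp (-(a/2) * p.1)))
        * (p.2 ^ (c-1) * Real.exp (-(b/2) * p.2))
      ∂((volume.restrict (Set.Ioi 0)).prod (volume.restrict (Set.Ioi 0))))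
      = (∫ t in Set.Ioi (0:ℝ), K * (t ^ (c-1) * Real.exp (-(a/2) * t)))
          * (∫ t in Set.Ioi (0:ℝ), t ^ (c-1) * Real.exp (-(b/2) * t)) :=
        integral_prod_mul (f := fun t : ℝ => K * (t ^ (c-1) * Real.exp (-(a/2) * t)))
          (g := fun t : ℝ => t ^ (c-1) * Real.exp (-(b/2) * t))
    _ = _ := by rw [integral_const_mul, gval ha hc, gval hb hc]

lemma Wfun_int_val {A B C : Ω → ℝ} {m : ℕ} {c : ℝ} (hc : 0 < c) (ω : Ω)
    (hA : 0 < A ω) (hB : 0 < B ω) :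
    (∫ p : ℝ × ℝ, Wfun A B C m c (ω, p)
      ∂((volume.restrict (Set.Ioi 0)).prod (volume.restrict (Set.Ioi 0))))
      = ((-C ω)^m * ((2/A ω)^c * Real.Gamma c)) * ((2/B ω)^c * Real.Gamma c) := by
  have hfun : (fun p : ℝ × ℝ => Wfun A B C m c (ω, p))
      = fun p : ℝ × ℝ => ((-C ω)^m * (p.1 ^ (c-1) * Real.exp (-(A ω/2) * p.1)))
          * (p.2 ^ (c-1) * Real.exp (-(B ω/2) * p.2)) := rfl
  rw [hfun]
  exact prod_int_val (K := (-C ω)^m) hA hB hc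

lemma Wfun_int_norm {A B C : Ω → ℝ} {m : ℕ} {c : ℝ} (hc : 0 < c) (ω : Ω)
    (hA : 0 < A ω) (hB : 0 < B ω) :
    (∫ p : ℝ × ℝ, ‖Wfun A B C m c (ω, p)‖
      ∂((volume.restrict (Set.Ioi 0)).prod (volume.restrict (Set.Ioi 0))))
      = (|C ω|^m * ((2/A ω)^c * Real.Gamma c)) * ((2/B ω)^c * Real.Gamma c) := by
  have h1 : ∀ p : ℝ × ℝ, p.1 ∈ Set.Ioi (0:ℝ) → p.2 ∈ Set.Ioi (0:ℝ) →
      ‖Wfun A B C m c (ω, p)‖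
      = (|C ω|^m * (p.1 ^ (c-1) * Real.exp (-(A ω/2) * p.1)))
          * (p.2 ^ (c-1) * Real.exp (-(B ω/2) * p.2)) := by
    intro p hp1 hp2
    rw [Set.mem_Ioi] at hp1 hp2
    have e1 : (0:ℝ) ≤ p.1 ^ (c-1) * Real.exp (-(A ω/2) * p.1) :=
      mul_nonneg (Real.rpow_nonneg hp1.le _) (Real.exp_pos _).le
    have e2 : (0:ℝ) ≤ p.2 ^ (c-1) * Real.exp (-(B ω/2) * p.2) :=
      mul_nonneg (Real.rpow_nonneg hp2.le _) (Real.exp_pos _).le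
    simp only [Wfun, Real.norm_eq_abs, abs_mul, abs_pow, abs_neg,
      abs_of_nonneg e1, abs_of_nonneg e2]
  have h2 : (∫ p : ℝ × ℝ, ‖Wfun A B C m c (ω, p)‖
      ∂((volume.restrict (Set.Ioi 0)).prod (volume.restrict (Set.Ioi 0))))
      = ∫ p : ℝ × ℝ, (|C ω|^m * (p.1 ^ (c-1) * Real.exp (-(A ω/2) * p.1)))
          * (p.2 ^ (c-1) * Real.exp (-(B ω/2) * p.2))
      ∂((volume.restrict (Set.Ioi 0)).prod (volume.restrict (Set.Ioi 0))) := by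
    refine integral_congr_ae ?_
    have hae : ∀ᵐ p : ℝ × ℝ
        ∂((volume.restrict (Set.Ioi 0)).prod (volume.restrict (Set.Ioi (0:ℝ)))),
        p.1 ∈ Set.Ioi (0:ℝ) ∧ p.2 ∈ Set.Ioi (0:ℝ) := by
      rw [Measure.ae_prod_iff_ae_ae]
      · filter_upwards [self_mem_ae_restrict measurableSet_Ioi] with t ht
        filter_upwards [self_mem_ae_restrict measurableSet_Ioi] with u hu
        exact ⟨ht, hu⟩
      · exact (measurableSet_Ioi.preimage measurable_fst).inter
          (measurableSet_Ioi.preimage measurable_snd)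
    filter_upwards [hae] with p hp using h1 p hp.1 hp.2
  rw [h2]
  exact prod_int_val (K := |C ω|^m) hA hB hc

lemma Wfun_int_omega {A B C : Ω → ℝ} {m : ℕ} {c : ℝ} (hc : 0 < c) (ω : Ω)
    (hA : 0 < A ω) (hB : 0 < B ω) :
    Integrable (fun p : ℝ × ℝ => Wfun A B C m c (ω, p))
      ((volume.restrict (Set.Ioi 0)).prod (volume.restrict (Set.Ioi 0))) := by
  have hfun : (fun p : ℝ × ℝ => Wfun A B C m c (ω, p))
      = fun p : ℝ × ℝ => (fun t : ℝ => (-C ω)^m * (t ^ (c-1) * Real.exp (-(A ω/2) * t))) p.1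
          * (fun t : ℝ => t ^ (c-1) * Real.exp (-(B ω/2) * t)) p.2 := rfl
  rw [hfun]
  exact Integrable.mul_prod ((gint hA hc).const_mul ((-C ω)^m)) (gint hB hc)

lemma Wfun_measurable {A B C : Ω → ℝ} (m : ℕ) (c : ℝ)
    (hAm : Measurable A) (hBm : Measurable B) (hCm : Measurable C) :
    Measurable (Wfun A B C m c) := by
  unfold Wfun
  apply Measurable.mul
  apply Measurable.mul
  · fun_prop
  · apply Measurable.mul
    · fun_prop
    · apply Real.measurable_exp.comp; fun_prop
  · apply Measurable.mul
    · fun_prop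
    · apply Real.measurable_exp.comp; fun_prop

lemma Wfun_integrable' (μ : Measure Ω) [IsProbabilityMeasure μ] {A B C : Ω → ℝ} {m : ℕ}
    (hm : 1 ≤ m)
    (hAm : Measurable A) (hBm : Measurable B) (hCm : Measurable C)
    (hA : ∀ ω, 0 ≤ A ω) (hB : ∀ ω, 0 ≤ B ω)
    (hCs : ∀ ω, |C ω| ≤ Real.sqrt (A ω * B ω))
    (hpos : ∀ᵐ ω ∂μ, 0 < A ω ∧ 0 < B ω) :
    Integrable (Wfun A B C m ((m:ℝ)/2))
      (μ.prod ((volume.restrict (Set.Ioi 0)).prod (volume.restrict (Set.Ioi 0)))) := by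
  have hc : (0:ℝ) < (m:ℝ)/2 := by
    have : (1:ℝ) ≤ (m:ℝ) := by exact_mod_cast hm
    linarith
  have hΓ : 0 < Real.Gamma ((m:ℝ)/2) := Real.Gamma_pos_of_pos hc
  have hfm : AEStronglyMeasurable (Wfun A B C m ((m:ℝ)/2))
      (μ.prod ((volume.restrict (Set.Ioi 0)).prod (volume.restrict (Set.Ioi 0)))) :=
    (Wfun_measurable m _ hAm hBm hCm).aestronglyMeasurable
  rw [integrable_prod_iff hfm]
  constructor
  · filter_upwards [hpos] with ω h using Wfun_int_omega hc ω h.1 h.2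
  · refine Integrable.mono' (integrable_const ((2:ℝ)^m * Real.Gamma ((m:ℝ)/2) ^ 2))
      (hfm.norm.integral_prod_right') ?_
    filter_upwards [hpos] with ω h
    rw [Real.norm_eq_abs, abs_of_nonneg (integral_nonneg fun p => norm_nonneg _),
      Wfun_int_norm hc ω h.1 h.2]
    have hCm' : |C ω|^m ≤ (A ω * B ω)^((m:ℝ)/2) := by
      calc |C ω|^m ≤ (Real.sqrt (A ω * B ω))^m :=
            pow_le_pow_left₀ (abs_nonneg _) (hCs ω) m
        _ = (A ω * B ω)^((m:ℝ)/2) := sqrt_pow_eq (mul_nonneg (hA ω) (hB ω)) m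
    have hABc : (0:ℝ) < (A ω * B ω)^((m:ℝ)/2) :=
      Real.rpow_pos_of_pos (mul_pos h.1 h.2) _
    have hstep : ((2/A ω)^((m:ℝ)/2) * Real.Gamma ((m:ℝ)/2))
          * ((2/B ω)^((m:ℝ)/2) * Real.Gamma ((m:ℝ)/2))
        = (2^m / (A ω * B ω)^((m:ℝ)/2)) * Real.Gamma ((m:ℝ)/2) ^ 2 := by
      rw [show ((2/A ω)^((m:ℝ)/2) * Real.Gamma ((m:ℝ)/2))
            * ((2/B ω)^((m:ℝ)/2) * Real.Gamma ((m:ℝ)/2))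
          = ((2/A ω)^((m:ℝ)/2) * (2/B ω)^((m:ℝ)/2)) * Real.Gamma ((m:ℝ)/2)^2 by ring,
        two_div_rpow_mul h.1 h.2]
    calc |C ω|^m * ((2/A ω)^((m:ℝ)/2) * Real.Gamma ((m:ℝ)/2))
          * ((2/B ω)^((m:ℝ)/2) * Real.Gamma ((m:ℝ)/2))
        = |C ω|^m * (((2/A ω)^((m:ℝ)/2) * Real.Gamma ((m:ℝ)/2))
          * ((2/B ω)^((m:ℝ)/2) * Real.Gamma ((m:ℝ)/2))) := by ring
      _ = |C ω|^m * ((2^m / (A ω * B ω)^((m:ℝ)/2)) * Real.Gamma ((m:ℝ)/2) ^ 2) := by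
          rw [hstep]
      _ ≤ (A ω * B ω)^((m:ℝ)/2) * ((2^m / (A ω * B ω)^((m:ℝ)/2)) * Real.Gamma ((m:ℝ)/2) ^ 2) :=
          mul_le_mul_of_nonneg_right hCm' (by positivity)
      _ = 2^m * Real.Gamma ((m:ℝ)/2) ^2 := by field_simp

lemma main_aux (μ : Measure Ω) [IsProbabilityMeasure μ] {A B C : Ω → ℝ}
    (hAm : Measurable A) (hBm : Measurable B) (hCm : Measurable C)
    (hA : ∀ ω, 0 ≤ A ω) (hB : ∀ ω, 0 ≤ B ω) (hC : ∀ ω, |C ω| ≤ (A ω + B ω)/2)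
    (hCs : ∀ ω, |C ω| ≤ Real.sqrt (A ω * B ω))
    (hpos : ∀ᵐ ω ∂μ, 0 < A ω ∧ 0 < B ω) (m : ℕ) (hm : 1 ≤ m) :
    ∫ ω, (C ω / Real.sqrt (A ω * B ω)) ^ m ∂μ
      = ((-1 : ℝ) ^ m / (2 ^ m * Real.Gamma ((m : ℝ) / 2) ^ 2)) *
          ∫ s11 in Set.Ioi (0 : ℝ), ∫ s22 in Set.Ioi (0 : ℝ),
            s11 ^ ((m : ℝ) / 2 - 1) * s22 ^ ((m : ℝ) / 2 - 1) *
              iteratedDeriv m (fun s12 =>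
                ∫ ω, Real.exp (-(1/2) * (s11 * A ω + 2 * s12 * C ω + s22 * B ω)) ∂μ) 0 := by
  have hc : (0:ℝ) < (m:ℝ)/2 := by
    have : (1:ℝ) ≤ (m:ℝ) := by exact_mod_cast hm
    linarith
  have hΓ : 0 < Real.Gamma ((m:ℝ)/2) := Real.Gamma_pos_of_pos hc
  have hfint := Wfun_integrable' μ hm hAm hBm hCm hA hB hCs hpos
  -- final pointwise identity
  have hfinal : ∀ᵐ ω ∂μ,
      ((-1 : ℝ) ^ m / (2 ^ m * Real.Gamma ((m:ℝ)/2) ^ 2)) *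
        (∫ p, Wfun A B C m ((m:ℝ)/2) (ω, p)
          ∂((volume.restrict (Set.Ioi 0)).prod (volume.restrict (Set.Ioi 0))))
        = (C ω / Real.sqrt (A ω * B ω)) ^ m := by
    filter_upwards [hpos] with ω h
    rw [Wfun_int_val hc ω h.1 h.2]
    have hABpos : (0:ℝ) < A ω * B ω := mul_pos h.1 h.2
    have hABc : (0:ℝ) < (A ω * B ω)^((m:ℝ)/2) := Real.rpow_pos_of_pos hABpos _
    have hstep : ((2/A ω)^((m:ℝ)/2) * Real.Gamma ((m:ℝ)/2))
          * ((2/B ω)^((m:ℝ)/2) * Real.Gamma ((m:ℝ)/2))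
        = (2^m / (A ω * B ω)^((m:ℝ)/2)) * Real.Gamma ((m:ℝ)/2) ^ 2 := by
      rw [show ((2/A ω)^((m:ℝ)/2) * Real.Gamma ((m:ℝ)/2))
            * ((2/B ω)^((m:ℝ)/2) * Real.Gamma ((m:ℝ)/2))
          = ((2/A ω)^((m:ℝ)/2) * (2/B ω)^((m:ℝ)/2)) * Real.Gamma ((m:ℝ)/2)^2 by ring,
        two_div_rpow_mul h.1 h.2]
    rw [show ((-1 : ℝ) ^ m / (2 ^ m * Real.Gamma ((m:ℝ)/2) ^ 2)) *
        (((-C ω)^m * ((2/A ω)^((m:ℝ)/2) * Real.Gamma ((m:ℝ)/2)))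
          * ((2/B ω)^((m:ℝ)/2) * Real.Gamma ((m:ℝ)/2)))
        = ((-1 : ℝ) ^ m / (2 ^ m * Real.Gamma ((m:ℝ)/2) ^ 2)) * ((-C ω)^m *
          (((2/A ω)^((m:ℝ)/2) * Real.Gamma ((m:ℝ)/2))
            * ((2/B ω)^((m:ℝ)/2) * Real.Gamma ((m:ℝ)/2)))) by ring, hstep]
    rw [div_pow, sqrt_pow_eq hABpos.le m, neg_pow]
    have h2m : (0:ℝ) < 2^m := by positivity
    field_simp
    ring_nf
    rw [show ((-1:ℝ))^(m*2) = 1 by rw [mul_comm, pow_mul]; norm_num]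
    ring
  -- pointwise identity for the iterated derivative
  have hptw : ∀ s11 ∈ Set.Ioi (0:ℝ), ∀ s22 ∈ Set.Ioi (0:ℝ),
      s11 ^ ((m:ℝ)/2 - 1) * s22 ^ ((m:ℝ)/2 - 1) *
        iteratedDeriv m (fun s12 =>
          ∫ ω, Real.exp (-(1/2) * (s11 * A ω + 2 * s12 * C ω + s22 * B ω)) ∂μ) 0
      = ∫ ω, Wfun A B C m ((m:ℝ)/2) (ω, (s11, s22)) ∂μ := by
    intro s11 hs11 s22 hs22
    rw [Set.mem_Ioi] at hs11 hs22
    have hδ : 0 < min s11 s22 / 2 := by positivity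
    have hIT := iteratedDeriv_G μ hAm hBm hCm hA hB hC hδ
      (by calc 2 * (min s11 s22 / 2) = min s11 s22 := by ring
            _ ≤ s11 := min_le_left _ _)
      (by calc 2 * (min s11 s22 / 2) = min s11 s22 := by ring
            _ ≤ s22 := min_le_right _ _)
      m 0 (by rwa [abs_zero])
    rw [hIT, ← integral_const_mul]
    refine integral_congr_ae (Filter.Eventually.of_forall fun ω => ?_)
    simp only [Wfun]
    rw [show -(1/2) * (s11 * A ω + 2 * 0 * C ω + s22 * B ω)
        = (-(A ω/2) * s11) + (-(B ω/2) * s22) by ring, Real.exp_add]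
    ring
  have hg : Integrable
      (fun p : ℝ × ℝ => ∫ ω, Wfun A B C m ((m:ℝ)/2) (ω, p) ∂μ)
      ((volume.restrict (Set.Ioi 0)).prod (volume.restrict (Set.Ioi 0))) :=
    hfint.integral_prod_right
  calc ∫ ω, (C ω / Real.sqrt (A ω * B ω)) ^ m ∂μ
      = ∫ ω, ((-1 : ℝ) ^ m / (2 ^ m * Real.Gamma ((m:ℝ)/2) ^ 2)) *
          (∫ p, Wfun A B C m ((m:ℝ)/2) (ω, p)
            ∂((volume.restrict (Set.Ioi 0)).prod (volume.restrict (Set.Ioi 0)))) ∂μ :=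
        (integral_congr_ae hfinal).symm
    _ = ((-1 : ℝ) ^ m / (2 ^ m * Real.Gamma ((m:ℝ)/2) ^ 2)) *
          ∫ ω, (∫ p, Wfun A B C m ((m:ℝ)/2) (ω, p)
            ∂((volume.restrict (Set.Ioi 0)).prod (volume.restrict (Set.Ioi 0)))) ∂μ :=
        integral_const_mul _ _
    _ = ((-1 : ℝ) ^ m / (2 ^ m * Real.Gamma ((m:ℝ)/2) ^ 2)) * ∫ s11 in Set.Ioi (0 : ℝ),
          ∫ s22 in Set.Ioi (0 : ℝ), s11 ^ ((m:ℝ)/2 - 1) * s22 ^ ((m:ℝ)/2 - 1) *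
            iteratedDeriv m (fun s12 =>
              ∫ ω, Real.exp (-(1/2) * (s11 * A ω + 2 * s12 * C ω + s22 * B ω)) ∂μ) 0 := by
        congr 1
        rw [← integral_prod _ hfint, integral_prod_symm _ hfint]
        rw [show (∫ p, ∫ ω, Wfun A B C m ((m:ℝ)/2) (ω, p) ∂μ
              ∂((volume.restrict (Set.Ioi 0)).prod (volume.restrict (Set.Ioi 0))))
            = ∫ s11 in Set.Ioi (0:ℝ), ∫ s22 in Set.Ioi (0:ℝ),
                ∫ ω, Wfun A B C m ((m:ℝ)/2) (ω, (s11, s22)) ∂μ from integral_prod _ hg]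
        refine (setIntegral_congr_fun measurableSet_Ioi fun s11 hs11 => ?_)
        refine (setIntegral_congr_fun measurableSet_Ioi fun s22 hs22 => ?_)
        exact (hptw s11 hs11 s22 hs22).symm

end AuxLemmas

/-- Proposition 1 of Ernst et al. (2019): integro-differential representation of the
`m`-th moment of the empirical correlation `θ_n`. -/
theorem moment_formula (μ : Measure Ω) [IsProbabilityMeasure μ] (X Y : ℕ → Ω → ℝ)
    (hXm : ∀ i, Measurable (X i)) (hYm : ∀ i, Measurable (Y i))
    (hindep : iIndepFun (Sum.elim X Y) μ)
    (hX : ∀ i, Measure.map (X i) μ = gaussianReal 0 1)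
    (hY : ∀ i, Measure.map (Y i) μ = gaussianReal 0 1)
    (n : ℕ) (hn : 2 ≤ n) (m : ℕ) (hm : 1 ≤ m) :
    ∫ ω, (thetaN X Y n ω) ^ m ∂μ
      = ((-1 : ℝ) ^ m / (2 ^ m * Real.Gamma ((m : ℝ) / 2) ^ 2)) *
          ∫ s11 in Set.Ioi (0 : ℝ), ∫ s22 in Set.Ioi (0 : ℝ),
            s11 ^ ((m : ℝ) / 2 - 1) * s22 ^ ((m : ℝ) / 2 - 1) *
              iteratedDeriv m (fun s12 => phiN μ X Y n s11 s12 s22) 0 := by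
  have hn0 : n ≠ 0 := by omega
  have hpos : ∀ᵐ ω ∂μ, 0 < Zbil n (fun i => X i ω) (fun i => X i ω)
      ∧ 0 < Zbil n (fun i => Y i ω) (fun i => Y i ω) := by
    filter_upwards [ae_ne_zero (hXm 2) (hX 2), ae_ne_zero (hYm 2) (hY 2)] with ω h1 h2
    exact ⟨Zbil_self_pos hn h1, Zbil_self_pos hn h2⟩
  have h := main_aux μ (A := fun ω => Zbil n (fun i => X i ω) (fun i => X i ω))
    (B := fun ω => Zbil n (fun i => Y i ω) (fun i => Y i ω))
    (C := fun ω => Zbil n (fun i => X i ω) (fun i => Y i ω))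
    (measurable_Zbil n hXm hXm) (measurable_Zbil n hYm hYm) (measurable_Zbil n hXm hYm)
    (fun ω => Zbil_self_nonneg hn0 _) (fun ω => Zbil_self_nonneg hn0 _)
    (fun ω => abs_Zbil_le_half hn0 _ _) (fun ω => abs_Zbil_le_sqrt hn0 _ _)
    hpos m hm
  simp only [thetaN, phiN]
  exact h

end
end

section
/- Let X be a real random variable on a probability space with X > 0 almost surely, and let m ≥ 1 be an integer. Then E[X^{−m}] = (1/(m−1)!) · ∫₀^∞ s^{m−1} · E[e^{−s·X}] ds, as an identity in [0, ∞]. -/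
open MeasureTheory

/-- For a random variable `X > 0` a.s. and an integer `m ≥ 1`,
`E[X^{−m}] = (1/(m−1)!) ∫₀^∞ s^{m−1} E[e^{−sX}] ds`, as an identity in `[0,∞]`. -/
theorem neg_moment_eq_integral_mgf {Ω : Type*} [MeasurableSpace Ω]
    (μ : Measure Ω) [IsProbabilityMeasure μ] (X : Ω → ℝ) (hXm : Measurable X)
    (hXpos : ∀ᵐ ω ∂μ, 0 < X ω) (m : ℕ) (hm : 1 ≤ m) :
    (∫⁻ ω, ENNReal.ofReal ((X ω ^ m)⁻¹) ∂μ)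
      = ENNReal.ofReal (1 / (Nat.factorial (m - 1) : ℝ)) *
          ∫⁻ s in Set.Ioi (0 : ℝ),
            ENNReal.ofReal (s ^ (m - 1) * ∫ ω, Real.exp (-s * X ω) ∂μ) := by
  obtain ⟨k, rfl⟩ : ∃ k, m = k + 1 := ⟨m - 1, (Nat.succ_pred_eq_of_pos hm).symm⟩
  simp only [Nat.add_sub_cancel]
  -- integrability of ω ↦ exp (-s X ω) for s > 0
  have hint : ∀ s ∈ Set.Ioi (0 : ℝ), Integrable (fun ω => Real.exp (-s * X ω)) μ := by
    intro s hs
    refine ⟨((hXm.const_mul (-s)).exp).aestronglyMeasurable, ?_⟩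
    refine HasFiniteIntegral.mono' (hasFiniteIntegral_const (1 : ℝ)) ?_
    filter_upwards [hXpos] with ω hω
    rw [Real.norm_eq_abs, abs_of_pos (Real.exp_pos _)]
    exact Real.exp_le_one_iff.2 (by nlinarith [Set.mem_Ioi.1 hs])
  -- rewrite the integrand on the RHS as a lintegral
  have h1 : ∀ s ∈ Set.Ioi (0 : ℝ),
      ENNReal.ofReal (s ^ k * ∫ ω, Real.exp (-s * X ω) ∂μ)
        = ∫⁻ ω, ENNReal.ofReal (s ^ k * Real.exp (-s * X ω)) ∂μ := by
    intro s hs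
    have hs0 : (0 : ℝ) < s := hs
    rw [ENNReal.ofReal_mul (by positivity),
      ofReal_integral_eq_lintegral_ofReal (hint s hs)
        (Filter.Eventually.of_forall fun ω => (Real.exp_pos _).le),
      ← lintegral_const_mul' _ _ ENNReal.ofReal_ne_top]
    refine lintegral_congr fun ω => ?_
    rw [← ENNReal.ofReal_mul (by positivity)]
  rw [setLIntegral_congr_fun measurableSet_Ioi h1]
  -- swap the two integrals (Tonelli)
  rw [lintegral_lintegral_swap
    (((measurable_fst.pow_const k).mul
      ((measurable_fst.neg.mul (hXm.comp measurable_snd)).exp)).ennreal_ofReal.aemeasurable)]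
  -- compute the inner integral for each ω with X ω > 0
  have h2 : ∀ ω, 0 < X ω →
      (∫⁻ s in Set.Ioi (0 : ℝ), ENNReal.ofReal (s ^ k * Real.exp (-s * X ω)))
        = ENNReal.ofReal (Nat.factorial k) * ENNReal.ofReal ((X ω ^ (k + 1))⁻¹) := by
    intro ω hω
    have hInt : IntegrableOn (fun s : ℝ => s ^ k * Real.exp (-s * X ω)) (Set.Ioi 0) := by
      have h := integrableOn_rpow_mul_exp_neg_mul_rpow (p := 1) (s := (k : ℝ)) (b := X ω)
        (lt_of_lt_of_le neg_one_lt_zero (Nat.cast_nonneg k)) one_pos hω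
      refine h.congr_fun (fun x hx => ?_) measurableSet_Ioi
      have hx0 : (0 : ℝ) < x := hx
      beta_reduce
      rw [Real.rpow_natCast, Real.rpow_one]
      ring_nf
    rw [← ofReal_integral_eq_lintegral_ofReal hInt
      (((ae_restrict_mem measurableSet_Ioi).mono fun s hs => by
        have : (0:ℝ) < s := hs; positivity))]
    have heq : ∫ s in Set.Ioi (0 : ℝ), s ^ k * Real.exp (-s * X ω)
        = ∫ t in Set.Ioi (0 : ℝ), t ^ (((k : ℝ) + 1) - 1) * Real.exp (-(X ω * t)) := by
      refine setIntegral_congr_fun measurableSet_Ioi fun t ht => ?_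
      have ht0 : (0 : ℝ) < t := ht
      rw [add_sub_cancel_right, Real.rpow_natCast]
      ring_nf
    rw [heq, Real.integral_rpow_mul_exp_neg_mul_Ioi (by positivity) hω]
    have : ((k : ℝ) + 1) = ((k + 1 : ℕ) : ℝ) := by push_cast; ring
    rw [Real.Gamma_nat_eq_factorial, this, Real.rpow_natCast, one_div, inv_pow,
      ← ENNReal.ofReal_mul (by positivity), mul_comm]
  -- put everything together
  have h3 : (∫⁻ ω, (∫⁻ s in Set.Ioi (0 : ℝ),
        ENNReal.ofReal (s ^ k * Real.exp (-s * X ω)) ∂(volume)) ∂μ)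
      = ENNReal.ofReal (Nat.factorial k) * ∫⁻ ω, ENNReal.ofReal ((X ω ^ (k + 1))⁻¹) ∂μ := by
    rw [← lintegral_const_mul' _ _ ENNReal.ofReal_ne_top]
    refine lintegral_congr_ae ?_
    filter_upwards [hXpos] with ω hω using h2 ω hω
  rw [h3, ← mul_assoc, ← ENNReal.ofReal_mul (by positivity), one_div,
    inv_mul_cancel₀ (by exact_mod_cast (Nat.factorial_pos k).ne'), ENNReal.ofReal_one, one_mul]
end

section
/- For every integer n ≥ 11 and every real s ≥ 0, d_n(−2s/n) ≥ 2⁵ · C(n, 11) · n^{−11} · s⁵, where C(n,11) is the binomial coefficient n choose 11. -/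
open Finset

noncomputable section

/-! ### Tridiagonal matrices -/

def tri (m : ℕ) (d e : ℝ) : Matrix (Fin m) (Fin m) ℝ := fun i j =>
  if i = j then d else if (i : ℕ) + 1 = j ∨ (j : ℕ) + 1 = i then e else 0

lemma tri_det_zero (d e : ℝ) : (tri 0 d e).det = 1 := Matrix.det_fin_zero

lemma tri_det_one (d e : ℝ) : (tri 1 d e).det = d := by
  rw [Matrix.det_fin_one]; simp [tri]

lemma tri_submatrix (k : ℕ) (d e : ℝ) :
    (tri (k + 1) d e).submatrix Fin.succ Fin.succ = tri k d e := by
  ext i j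
  simp only [Matrix.submatrix_apply, tri, Fin.succ_inj, Fin.val_succ]
  by_cases hij : i = j
  · simp [hij]
  · rw [if_neg hij, if_neg hij]
    by_cases h : (i : ℕ) + 1 = (j : ℕ) ∨ (j : ℕ) + 1 = (i : ℕ)
    · rw [if_pos (by omega), if_pos h]
    · rw [if_neg (by omega), if_neg h]

lemma tri_apply_succ (k : ℕ) (d e : ℝ) (i j : Fin k) :
    tri (k + 1) d e i.succ j.succ = tri k d e i j :=
  congrFun (congrFun (tri_submatrix k d e) i) j

lemma tri_det_succ_succ (m : ℕ) (d e : ℝ) :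
    (tri (m + 2) d e).det = d * (tri (m + 1) d e).det - e ^ 2 * (tri m d e).det := by
  rw [Matrix.det_succ_row_zero, Fin.sum_univ_succ, Fin.sum_univ_succ]
  simp only [Fin.succ_zero_eq_one]
  have h0 : tri (m + 2) d e 0 0 = d := by simp [tri]
  have h1 : tri (m + 2) d e 0 1 = e := by simp [tri, Fin.ext_iff]
  have htail : ∀ i : Fin m, tri (m + 2) d e 0 i.succ.succ = 0 := by
    intro i
    simp only [tri, Fin.ext_iff, Fin.val_succ, Fin.val_zero]
    exact if_neg (by omega)
  have hsum0 : (∑ i : Fin m, (-1 : ℝ) ^ ((i.succ.succ : Fin (m+2)) : ℕ) *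
      tri (m + 2) d e 0 i.succ.succ *
      ((tri (m + 2) d e).submatrix Fin.succ (Fin.succAbove i.succ.succ)).det) = 0 := by
    apply Finset.sum_eq_zero; intro i _; rw [htail]; ring
  rw [hsum0, h0, h1]
  have hm0 : (tri (m + 2) d e).submatrix Fin.succ (Fin.succAbove 0) = tri (m+1) d e := by
    rw [Fin.succAbove_zero, tri_submatrix]
  have hz : (1 : Fin (m+2)) = (0 : Fin (m+1)).succ := by simp
  have hm1 : ((tri (m + 2) d e).submatrix Fin.succ (Fin.succAbove 1)).det
      = e * (tri m d e).det := by
    rw [Matrix.det_succ_column_zero, Fin.sum_univ_succ]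
    have ha : ((tri (m + 2) d e).submatrix Fin.succ (Fin.succAbove 1)) 0 0 = e := by
      simp only [Matrix.submatrix_apply, hz, Fin.succ_succAbove_zero]
      simp [tri, Fin.ext_iff]
    have hb : ∀ i : Fin m,
        ((tri (m + 2) d e).submatrix Fin.succ (Fin.succAbove 1)) i.succ 0 = 0 := by
      intro i
      simp only [Matrix.submatrix_apply, hz, Fin.succ_succAbove_zero]
      simp only [tri, Fin.ext_iff, Fin.val_succ, Fin.val_zero]
      exact if_neg (by omega)
    have hs0 : (∑ i : Fin m, (-1 : ℝ) ^ ((i.succ : Fin (m+1)) : ℕ) *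
        ((tri (m + 2) d e).submatrix Fin.succ (Fin.succAbove 1)) i.succ 0 *
        (((tri (m + 2) d e).submatrix Fin.succ (Fin.succAbove 1)).submatrix
          (Fin.succAbove i.succ) Fin.succ).det) = 0 := by
      apply Finset.sum_eq_zero; intro i _; rw [hb]; ring
    rw [hs0, ha]
    have hmm : (((tri (m + 2) d e).submatrix Fin.succ (Fin.succAbove 1)).submatrix
        (Fin.succAbove 0) Fin.succ) = tri m d e := by
      ext i j
      simp only [Matrix.submatrix_apply, Fin.succAbove_zero, hz, Fin.succ_succAbove_succ]
      rw [tri_apply_succ, tri_apply_succ]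
    rw [hmm]
    simp
  rw [hm0, hm1]
  simp only [Fin.val_zero, Fin.val_one, pow_zero, pow_one]
  ring

lemma tri_det_closed : ∀ (m : ℕ) (u v e : ℝ), e ^ 2 = u * v →
    (u - v) * (tri m (u + v) e).det = u ^ (m + 1) - v ^ (m + 1)
  | 0, u, v, e, _ => by rw [tri_det_zero]; ring
  | 1, u, v, e, _ => by rw [tri_det_one]; ring
  | (m + 2), u, v, e, h => by
    have h1 := tri_det_closed (m + 1) u v e h
    have h0 := tri_det_closed m u v e h
    rw [tri_det_succ_succ]
    linear_combination (u + v) * h1 - (u * v) * h0 - ((u - v) * (tri m (u+v) e).det) * h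

lemma tri_det_deg : ∀ (m : ℕ) (c : ℝ),
    (tri m (2 * c) (-c)).det = (m + 1) * c ^ m
  | 0, c => by rw [tri_det_zero]; norm_num
  | 1, c => by rw [tri_det_one]; norm_num
  | (m + 2), c => by
    have h1 := tri_det_deg (m + 1) c
    have h0 := tri_det_deg m c
    rw [tri_det_succ_succ, h1, h0]
    push_cast
    ring

/-! ### `tri (n-1) (2n) (-n)` is the inverse of `Kmat n` -/

def Kf (n a b : ℕ) : ℝ := ((min a b : ℕ) : ℝ) / n - (a : ℝ) * (b : ℝ) / (n : ℝ) ^ 2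

lemma Kmat_apply (n : ℕ) (j k : Fin (n - 1)) : Kmat n j k = Kf n (j.1 + 1) (k.1 + 1) := by
  simp [Kmat, Kf]

lemma Kf_zero (n a : ℕ) : Kf n a 0 = 0 := by simp [Kf]

lemma Kf_top (n a : ℕ) (ha : a ≤ n) (hn : 0 < n) : Kf n a n = 0 := by
  have : min a n = a := min_eq_left ha
  have hnR : ((n:ℝ)) ≠ 0 := Nat.cast_ne_zero.2 hn.ne'
  simp only [Kf, this]
  field_simp
  ring

lemma Kmul (n : ℕ) (hn : 2 ≤ n) :
    Kmat n * tri (n - 1) (2 * (n : ℝ)) (-(n : ℝ)) = 1 := by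
  have hnR : (0:ℝ) < n := by positivity
  have hn0 : ((n:ℝ)) ≠ 0 := hnR.ne'
  ext j i
  rw [Matrix.mul_apply, Matrix.one_apply]
  have hsplit : ∀ k : Fin (n - 1), Kmat n j k * tri (n - 1) (2 * (n:ℝ)) (-(n:ℝ)) k i =
      (2 * (n:ℝ)) * (if k = i then Kmat n j k else 0)
      + (-(n:ℝ)) * (if (k : ℕ) + 1 = (i : ℕ) then Kmat n j k else 0)
      + (-(n:ℝ)) * (if (i : ℕ) + 1 = (k : ℕ) then Kmat n j k else 0) := by
    intro k
    by_cases h1 : k = i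
    · subst h1
      have hkk : ¬((k:ℕ)+1 = (k:ℕ)) := by omega
      simp only [tri, if_pos rfl, ite_true, eq_self_iff_true, if_neg hkk]
      ring
    · have h1' : (k:ℕ) ≠ (i:ℕ) := fun h => h1 (Fin.ext h)
      rw [if_neg h1]
      by_cases h2 : (k : ℕ) + 1 = (i : ℕ)
      · rw [if_pos h2, if_neg (by omega)]
        simp only [tri, if_neg h1, if_pos (Or.inl h2)]
        ring
      · rw [if_neg h2]
        by_cases h3 : (i : ℕ) + 1 = (k : ℕ)
        · rw [if_pos h3]
          simp only [tri, if_neg h1, if_pos (Or.inr h3)]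
          ring
        · rw [if_neg h3]
          simp only [tri, if_neg h1, if_neg (show ¬((k:ℕ)+1 = i ∨ (i:ℕ)+1 = k) by omega)]
          ring
  rw [Finset.sum_congr rfl (fun k _ => hsplit k)]
  rw [Finset.sum_add_distrib, Finset.sum_add_distrib, ← Finset.mul_sum, ← Finset.mul_sum,
    ← Finset.mul_sum]
  have hS0 : (∑ k : Fin (n-1), if k = i then Kmat n j k else 0) = Kf n (j.1+1) (i.1+1) := by
    rw [Finset.sum_ite_eq' univ i (fun k => Kmat n j k)]
    simp [Kmat_apply]
  have hS1 : (∑ k : Fin (n-1), if (k:ℕ) + 1 = (i:ℕ) then Kmat n j k else 0)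
      = Kf n (j.1+1) i.1 := by
    by_cases hi : (i : ℕ) = 0
    · rw [Finset.sum_eq_zero (fun k _ => if_neg (by omega)), hi, Kf_zero]
    · have hib : (i:ℕ) - 1 < n - 1 := by omega
      set k0 : Fin (n-1) := ⟨(i:ℕ) - 1, hib⟩ with hk0
      have : ∀ k : Fin (n-1), (if (k:ℕ) + 1 = (i:ℕ) then Kmat n j k else 0)
          = (if k = k0 then Kmat n j k else 0) := by
        intro k
        by_cases h : (k:ℕ) + 1 = (i:ℕ)
        · rw [if_pos h, if_pos (Fin.ext (by simp [hk0]; omega))]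
        · rw [if_neg h, if_neg (fun hc => h (by rw [hc]; simp [hk0]; omega))]
      rw [Finset.sum_congr rfl (fun k _ => this k),
        Finset.sum_ite_eq' univ k0 (fun k => Kmat n j k)]
      simp only [Finset.mem_univ, if_true, Kmat_apply]
      congr 1
      simp only [hk0, Fin.val_mk]
      omega
  have hS2 : (∑ k : Fin (n-1), if (i:ℕ) + 1 = (k:ℕ) then Kmat n j k else 0)
      = Kf n (j.1+1) (i.1+2) := by
    by_cases hi : (i : ℕ) + 1 < n - 1
    · set k0 : Fin (n-1) := ⟨(i:ℕ) + 1, hi⟩ with hk0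
      have : ∀ k : Fin (n-1), (if (i:ℕ) + 1 = (k:ℕ) then Kmat n j k else 0)
          = (if k = k0 then Kmat n j k else 0) := by
        intro k
        by_cases h : (i:ℕ) + 1 = (k:ℕ)
        · rw [if_pos h, if_pos (Fin.ext h.symm)]
        · rw [if_neg h, if_neg (fun hc => h (by rw [hc]))]
      rw [Finset.sum_congr rfl (fun k _ => this k),
        Finset.sum_ite_eq' univ k0 (fun k => Kmat n j k)]
      simp only [Finset.mem_univ, if_true, Kmat_apply]
      rfl
    · have hieq : (i:ℕ) + 2 = n := by have := i.isLt; omega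
      rw [Finset.sum_eq_zero (fun k _ => if_neg (by have := k.isLt; omega)), hieq,
        Kf_top n (j.1+1) (by have := j.isLt; omega) (by omega)]
  rw [hS0, hS1, hS2]
  have hj := j.isLt
  have hi := i.isLt
  rcases lt_trichotomy (j:ℕ) (i:ℕ) with h | h | h
  · rw [if_neg (fun hc => by rw [hc] at h; exact lt_irrefl _ h)]
    simp only [Kf, min_eq_left (by omega : (j:ℕ)+1 ≤ (i:ℕ)+1),
      min_eq_left (by omega : (j:ℕ)+1 ≤ (i:ℕ)), min_eq_left (by omega : (j:ℕ)+1 ≤ (i:ℕ)+2)]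
    push_cast
    field_simp
    ring
  · rw [if_pos (Fin.ext h)]
    simp only [Kf, min_self, min_eq_right (by omega : (i:ℕ) ≤ (j:ℕ)+1),
      min_eq_left (by omega : (j:ℕ)+1 ≤ (i:ℕ)+2), h]
    push_cast
    field_simp
    rw [min_eq_right (by linarith : ((i:ℕ):ℝ) ≤ ((i:ℕ):ℝ) + 1),
      min_eq_left (by linarith : ((i:ℕ):ℝ) + 1 ≤ ((i:ℕ):ℝ) + 2)]
    ring
  · rw [if_neg (fun hc => by rw [hc] at h; exact lt_irrefl _ h)]
    simp only [Kf, min_eq_right (by omega : (i:ℕ)+1 ≤ (j:ℕ)+1),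
      min_eq_right (by omega : (i:ℕ) ≤ (j:ℕ)+1), min_eq_right (by omega : (i:ℕ)+2 ≤ (j:ℕ)+1)]
    push_cast
    field_simp
    ring

/-! ### The determinant identity -/

lemma dpoly_mul_pow (n : ℕ) (hn : 2 ≤ n) (lam : ℝ) :
    dpoly n lam * (n : ℝ) ^ n = (tri (n - 1) (2 * (n:ℝ) - lam) (-(n:ℝ))).det := by
  have hn0 : ((n:ℝ)) ≠ 0 := by positivity
  have hmul : (1 - lam • Kmat n) * tri (n - 1) (2 * (n:ℝ)) (-(n:ℝ))
      = tri (n - 1) (2 * (n:ℝ) - lam) (-(n:ℝ)) := by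
    rw [sub_mul, one_mul, Matrix.smul_mul, Kmul n hn]
    ext i j
    simp only [Matrix.sub_apply, Matrix.smul_apply, Matrix.one_apply, tri, smul_eq_mul]
    by_cases h : i = j <;> simp [h]
  have hdetN : (tri (n - 1) (2 * (n:ℝ)) (-(n:ℝ))).det = (n : ℝ) ^ n := by
    rw [tri_det_deg, Nat.cast_sub (show 1 ≤ n by omega)]
    push_cast
    rw [show (n:ℝ) - 1 + 1 = (n:ℝ) by ring, ← pow_succ']
    congr 1
    omega
  calc dpoly n lam * (n : ℝ) ^ n
      = (1 - lam • Kmat n).det * (tri (n - 1) (2 * (n:ℝ)) (-(n:ℝ))).det := by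
        rw [hdetN]; rfl
    _ = ((1 - lam • Kmat n) * tri (n - 1) (2 * (n:ℝ)) (-(n:ℝ))).det :=
        (Matrix.det_mul _ _).symm
    _ = _ := by rw [hmul]

/-! ### Binomial lower bound -/

lemma pow_sub_pow_ge (n : ℕ) (hn : 11 ≤ n) (c t : ℝ) (hc : 0 ≤ c) (ht : 0 ≤ t) :
    2 * (n.choose 11 : ℝ) * c ^ (n - 11) * t ^ 11 ≤ (c + t) ^ n - (c - t) ^ n := by
  have hdiff : (c+t)^n - (c-t)^n
      = ∑ k ∈ range (n+1), c^k * (t^(n-k) - (-t)^(n-k)) * (n.choose k : ℝ) := by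
    rw [show c - t = c + (-t) by ring, add_pow, add_pow, ← Finset.sum_sub_distrib]
    exact Finset.sum_congr rfl (fun k _ => by ring)
  rw [hdiff]
  have hmem : n - 11 ∈ range (n+1) := mem_range.2 (by omega)
  have hpos : ∀ k ∈ range (n+1), 0 ≤ c^k * (t^(n-k) - (-t)^(n-k)) * (n.choose k : ℝ) := by
    intro k _
    rcases Nat.even_or_odd (n - k) with he | ho
    · rw [he.neg_pow]; simp
    · rw [ho.neg_pow]
      have h2 : t^(n-k) - -(t^(n-k)) = 2 * t^(n-k) := by ring
      rw [h2]; positivity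
  have hsingle := Finset.single_le_sum hpos hmem
  have hterm : c^(n-11) * (t^(n-(n-11)) - (-t)^(n-(n-11))) * (n.choose (n-11) : ℝ)
      = 2 * (n.choose 11 : ℝ) * c^(n-11) * t^11 := by
    rw [show n - (n-11) = 11 by omega, Nat.choose_symm hn,
      Odd.neg_pow (by decide)]
    ring
  rw [← hterm]
  exact hsingle

/-- For `n >= 11` and `s >= 0`, `d_n(-2s/n) >= 2^5 * C(n,11) * n^{-11} * s^5`. -/
theorem dpoly_ge_poly (n : ℕ) (hn : 11 ≤ n) (s : ℝ) (hs : 0 ≤ s) :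
    2 ^ 5 * (n.choose 11 : ℝ) * ((n : ℝ) ^ 11)⁻¹ * s ^ 5 ≤ dpoly n (-2 * s / n) := by
  have hnR : (0:ℝ) < n := by positivity
  have hn0 : ((n:ℝ)) ≠ 0 := hnR.ne'
  rcases hs.eq_or_lt with h0 | hspos
  · rw [← h0]
    norm_num [dpoly]
  set c : ℝ := (n:ℝ) + s / n with hc
  set t : ℝ := Real.sqrt (2*s + s^2/(n:ℝ)^2) with htdef
  have ht2 : t ^ 2 = 2*s + s^2/(n:ℝ)^2 := Real.sq_sqrt (by positivity)
  have htpos : 0 < t := Real.sqrt_pos.2 (by positivity)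
  have hcpos : 0 < c := by rw [hc]; positivity
  have hcsq : c ^ 2 = (n:ℝ)^2 + 2*s + s^2/(n:ℝ)^2 := by
    rw [hc]; field_simp; ring
  have he2 : (-(n:ℝ)) ^ 2 = (c + t) * (c - t) := by linear_combination ht2 - hcsq
  have hd := dpoly_mul_pow n (by omega) (-2*s/n)
  have harg : 2 * (n:ℝ) - (-2*s/n) = (c + t) + (c - t) := by rw [hc]; ring
  rw [harg] at hd
  have hclosed := tri_det_closed (n-1) (c+t) (c-t) (-(n:ℝ)) he2
  rw [show n - 1 + 1 = n by omega, show (c+t) - (c-t) = 2*t by ring] at hclosed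
  have hbin := pow_sub_pow_ge n hn c t hcpos.le htpos.le
  rw [← hclosed] at hbin
  set D := (tri (n-1) ((c+t)+(c-t)) (-(n:ℝ))).det with hD
  have hDge : (n.choose 11 : ℝ) * c^(n-11) * t^10 ≤ D := by
    have h2t : (0:ℝ) < 2*t := by positivity
    rw [show (2:ℝ) * (n.choose 11:ℝ) * c^(n-11) * t^11
      = (2*t) * ((n.choose 11:ℝ) * c^(n-11) * t^10) by ring] at hbin
    exact (mul_le_mul_iff_right₀ h2t).1 hbin
  have ht10 : (2*s)^5 ≤ t^10 := by
    rw [show t^10 = (t^2)^5 by ring, ht2]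
    exact pow_le_pow_left₀ (by positivity) (le_add_of_nonneg_right (by positivity)) 5
  have hcp : (n:ℝ)^(n-11) ≤ c^(n-11) := by
    apply pow_le_pow_left₀ hnR.le
    rw [hc]
    exact le_add_of_nonneg_right (by positivity)
  have hfinal : (n.choose 11:ℝ) * (n:ℝ)^(n-11) * ((2*s)^5) ≤ D := by
    refine le_trans ?_ hDge
    have h1 : (n.choose 11:ℝ) * (n:ℝ)^(n-11) ≤ (n.choose 11:ℝ) * c^(n-11) :=
      mul_le_mul_of_nonneg_left hcp (by positivity)
    exact mul_le_mul h1 ht10 (by positivity) (by positivity)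
  have hnn : (0:ℝ) < (n:ℝ)^n := by positivity
  rw [← mul_le_mul_iff_left₀ hnn, hd]
  have hpow : (n:ℝ)^(n-11) * (n:ℝ)^11 = (n:ℝ)^n := by
    rw [← pow_add]; congr 1; omega
  calc 2 ^ 5 * (n.choose 11 : ℝ) * ((n : ℝ) ^ 11)⁻¹ * s ^ 5 * (n:ℝ)^n
      = (n.choose 11:ℝ) * (n:ℝ)^(n-11) * ((2*s)^5) := by
        rw [← hpow]; field_simp
    _ ≤ D := hfinal

end
end

section
/- For every integer n ≥ 11 and every real s with 0 < s ≤ n²/2, d_n(−2s/n) ≥ ( e^{√(s/2)} − e^{−√(s/2)} ) / √(10·s). -/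
open Finset

noncomputable section

/-! ### Auxiliary tridiagonal machinery -/

def triT (a : ℝ) (m : ℕ) : Matrix (Fin m) (Fin m) ℝ :=
  Matrix.of fun i j => if (i : ℕ) = j then a else if (i:ℕ)+1 = j ∨ (j:ℕ)+1 = i then -1 else 0

lemma triT_succ_succ (a : ℝ) (m : ℕ) (i j : Fin m) :
    triT a (m+1) i.succ j.succ = triT a m i j := by
  simp only [triT, Matrix.of_apply, Fin.val_succ]
  congr 1
  · simp [Nat.succ_inj]
  · congr 1
    simp [Nat.succ_inj]

lemma triT_rec (a : ℝ) (m : ℕ) :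
    (triT a (m+2)).det = a * (triT a (m+1)).det - (triT a m).det := by
  rw [Matrix.det_succ_row_zero]
  rw [Fin.sum_univ_succ, Fin.sum_univ_succ]
  have h0 : triT a (m+2) 0 0 = a := by simp [triT]
  have h1 : triT a (m+2) 0 ((0:Fin (m+1)).succ) = -1 := by simp [triT]
  have hz : ∀ j : Fin m, triT a (m+2) 0 j.succ.succ = 0 := by
    intro j; simp [triT]
  rw [h0, h1]
  simp only [hz, mul_zero, zero_mul, mul_zero, Finset.sum_const_zero, add_zero]
  have hsub0 : (triT a (m+2)).submatrix Fin.succ ((0:Fin (m+2)).succAbove) = triT a (m+1) := by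
    ext i j
    rw [Matrix.submatrix_apply, Fin.zero_succAbove, triT_succ_succ]
  rw [hsub0]
  have hsub1 :
      ((triT a (m+2)).submatrix Fin.succ (((0:Fin (m+1)).succ).succAbove)).det
        = -(triT a m).det := by
    rw [Matrix.det_succ_column_zero]
    rw [Fin.sum_univ_succ]
    have hc0 : (triT a (m+2)).submatrix Fin.succ (((0:Fin (m+1)).succ).succAbove) 0 0 = -1 := by
      simp [triT, Fin.succAbove]
    have hcz : ∀ i : Fin m,
        (triT a (m+2)).submatrix Fin.succ (((0:Fin (m+1)).succ).succAbove) i.succ 0 = 0 := by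
      intro i
      simp [triT, Fin.succAbove]
    rw [hc0]
    simp only [hcz, mul_zero, zero_mul, Finset.sum_const_zero, add_zero]
    have : ((triT a (m+2)).submatrix Fin.succ (((0:Fin (m+1)).succ).succAbove)).submatrix
        ((0:Fin (m+1)).succAbove) Fin.succ = triT a m := by
      ext i j
      simp only [Matrix.submatrix_apply, Fin.zero_succAbove]
      have : ((0:Fin (m+1)).succ).succAbove j.succ = j.succ.succ := by
        simp [Fin.succAbove, Fin.lt_def]
      rw [this, triT_succ_succ, triT_succ_succ]
    rw [this]
    simp
  rw [hsub1]
  simp [Fin.val_succ]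
  ring

lemma det_triT (a : ℝ) (f : ℕ → ℝ) (h0 : f 0 = 1) (h1 : f 1 = a)
    (hrec : ∀ m, f (m+2) = a * f (m+1) - f m) : ∀ m, (triT a m).det = f m := by
  have key : ∀ m, (triT a m).det = f m ∧ (triT a (m+1)).det = f (m+1) := by
    intro m
    induction m with
    | zero =>
      refine ⟨?_, ?_⟩
      · rw [h0]; exact Matrix.det_fin_zero
      · rw [h1, Matrix.det_fin_one]; rfl
    | succ k ih => exact ⟨ih.2, by rw [triT_rec, ih.1, ih.2, hrec]⟩
  exact fun m => (key m).1

lemma det_triT_two (m : ℕ) : (triT 2 m).det = m + 1 := by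
  have := det_triT 2 (fun m => (m : ℝ) + 1) (by norm_num) (by norm_num)
    (fun m => by push_cast; ring) m
  simpa using this

lemma det_triT_cosh (θ : ℝ) (hθ : Real.sinh θ ≠ 0) (m : ℕ) :
    (triT (2 * Real.cosh θ) m).det = Real.sinh ((m + 1) * θ) / Real.sinh θ := by
  have := det_triT (2 * Real.cosh θ) (fun m => Real.sinh ((m + 1) * θ) / Real.sinh θ)
    (by simp [div_self hθ])
    (by
      have : ((1:ℕ) + 1 : ℝ) * θ = 2 * θ := by norm_num
      simp only [this, Real.sinh_two_mul]
      field_simp)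
    (fun k => by
      have e1 : ((k + 2 : ℕ) + 1 : ℝ) * θ = ((k + 1 : ℕ) + 1 : ℝ) * θ + θ := by push_cast; ring
      have e2 : ((k : ℕ) + 1 : ℝ) * θ = ((k + 1 : ℕ) + 1 : ℝ) * θ - θ := by push_cast; ring
      rw [e1, e2, Real.sinh_add, Real.sinh_sub]
      field_simp
      ring) m
  simpa using this

def gfun (n a b : ℕ) : ℝ :=
  ((min a b : ℕ) : ℝ) / n - ((a : ℕ) : ℝ) * ((b : ℕ) : ℝ) / (n : ℝ) ^ 2

lemma Kmat_eq (n : ℕ) (j k : Fin (n-1)) : Kmat n j k = gfun n (j.1+1) (k.1+1) := rfl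

lemma gfun_zero (n b : ℕ) : gfun n 0 b = 0 := by simp [gfun]

lemma gfun_top (n b : ℕ) (hn : 0 < n) (hb : b ≤ n) : gfun n n b = 0 := by
  have : min n b = b := by omega
  have hn' : (n:ℝ) ≠ 0 := Nat.cast_ne_zero.mpr hn.ne'
  rw [gfun, this, pow_two, mul_div_mul_left _ _ hn', sub_self]

lemma gkey (n j k : ℕ) (hn : 0 < n) (hj : j < n - 1) (hk : k < n - 1) :
    2 * gfun n (j+1) (k+1) - gfun n j (k+1) - gfun n (j+2) (k+1)
      = if j = k then (n:ℝ)⁻¹ else 0 := by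
  have hn' : (n:ℝ) ≠ 0 := Nat.cast_ne_zero.mpr hn.ne'
  rcases lt_trichotomy j k with h | h | h
  · rw [if_neg h.ne]
    have e1 : min (j+1) (k+1) = j+1 := by omega
    have e2 : min j (k+1) = j := by omega
    have e3 : min (j+2) (k+1) = j+2 := by omega
    rw [gfun, gfun, gfun, e1, e2, e3]
    push_cast
    field_simp
    ring
  · rw [if_pos h]
    subst h
    have e1 : min (j+1) (j+1) = j+1 := by omega
    have e2 : min j (j+1) = j := by omega
    have e3 : min (j+2) (j+1) = j+1 := by omega
    rw [gfun, gfun, gfun, e1, e2, e3]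
    push_cast
    field_simp
    ring
  · rw [if_neg h.ne']
    have e1 : min (j+1) (k+1) = k+1 := by omega
    have e2 : min j (k+1) = k+1 := by omega
    have e3 : min (j+2) (k+1) = k+1 := by omega
    rw [gfun, gfun, gfun, e1, e2, e3]
    push_cast
    field_simp
    ring

lemma mul_K (n : ℕ) (hn : 2 ≤ n) :
    triT 2 (n-1) * Kmat n = (n : ℝ)⁻¹ • (1 : Matrix (Fin (n-1)) (Fin (n-1)) ℝ) := by
  have hn0 : 0 < n := by omega
  ext j k
  rw [Matrix.mul_apply]
  have hsplit : ∀ i : Fin (n-1), triT 2 (n-1) j i * Kmat n i k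
      = (if (i:ℕ) = (j:ℕ) then 2 * Kmat n i k else 0)
      + ((if (i:ℕ) + 1 = (j:ℕ) then -Kmat n i k else 0)
      + (if (i:ℕ) = (j:ℕ) + 1 then -Kmat n i k else 0)) := by
    intro i
    simp only [triT, Matrix.of_apply]
    split_ifs <;> first | ring1 | (exfalso; omega)
  rw [Finset.sum_congr rfl (fun i _ => hsplit i), Finset.sum_add_distrib, Finset.sum_add_distrib]
  have S1 : (∑ i : Fin (n-1), if (i:ℕ) = (j:ℕ) then 2 * Kmat n i k else 0)
      = 2 * gfun n (j.1+1) (k.1+1) := by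
    have : ∀ i : Fin (n-1), ((i:ℕ) = (j:ℕ)) ↔ i = j := fun i => Fin.val_eq_val i j
    simp only [this]
    rw [Finset.sum_ite_eq' univ j (fun i => 2 * Kmat n i k)]
    simp [Kmat_eq]
  have S2 : (∑ i : Fin (n-1), if (i:ℕ) + 1 = (j:ℕ) then -Kmat n i k else 0)
      = -gfun n (j.1) (k.1+1) := by
    by_cases hj0 : (j:ℕ) = 0
    · rw [Finset.sum_eq_zero (fun i _ => if_neg (by omega))]
      rw [hj0, gfun_zero]
      ring
    · set a : Fin (n-1) := ⟨j.1 - 1, by omega⟩ with ha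
      have hiff : ∀ i : Fin (n-1), ((i:ℕ) + 1 = (j:ℕ)) ↔ i = a := by
        intro i
        rw [Fin.ext_iff]
        simp only [ha]
        omega
      simp only [hiff]
      rw [Finset.sum_ite_eq' univ a (fun i => -Kmat n i k)]
      simp only [Finset.mem_univ, if_pos, Kmat_eq]
      have : (a:ℕ) + 1 = (j:ℕ) := by simp only [ha]; omega
      rw [this]
  have S3 : (∑ i : Fin (n-1), if (i:ℕ) = (j:ℕ) + 1 then -Kmat n i k else 0)
      = -gfun n (j.1+2) (k.1+1) := by
    by_cases hj1 : (j:ℕ) + 1 < n - 1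
    · set a : Fin (n-1) := ⟨j.1 + 1, hj1⟩ with ha
      have hiff : ∀ i : Fin (n-1), ((i:ℕ) = (j:ℕ) + 1) ↔ i = a := by
        intro i
        rw [Fin.ext_iff]
      simp only [hiff]
      rw [Finset.sum_ite_eq' univ a (fun i => -Kmat n i k)]
      simp [Kmat_eq]
      rfl
    · rw [Finset.sum_eq_zero (fun i _ => if_neg (by omega))]
      have hj2 : j.1 + 2 = n := by have := j.2; omega
      rw [hj2, gfun_top n _ hn0 (by have := k.2; omega)]
      ring
  rw [S1, S2, S3]
  have hgk := gkey n j.1 k.1 hn0 j.2 k.2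
  rw [Matrix.smul_apply, Matrix.one_apply, smul_eq_mul]
  have hrhs : (n:ℝ)⁻¹ * (if j = k then (1:ℝ) else 0)
      = if (j:ℕ) = (k:ℕ) then (n:ℝ)⁻¹ else 0 := by
    simp only [Fin.ext_iff]
    split_ifs <;> ring
  rw [hrhs, ← hgk]
  ring

lemma dpoly_eq (n : ℕ) (hn : 2 ≤ n) (lam : ℝ) :
    dpoly n lam = (triT (2 - lam / n) (n-1)).det / n := by
  have hn0 : (0:ℝ) < n := by exact_mod_cast (by omega : 0 < n)
  have hmul := mul_K n hn
  have h1 : triT 2 (n-1) * (1 - lam • Kmat n) = triT (2 - lam/n) (n-1) := by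
    rw [Matrix.mul_sub, Matrix.mul_one, Matrix.mul_smul, hmul]
    ext i j
    simp only [Matrix.sub_apply, Matrix.smul_apply, Matrix.smul_apply, Matrix.one_apply,
      triT, Matrix.of_apply, smul_eq_mul]
    by_cases h : (i:ℕ) = (j:ℕ)
    · rw [if_pos h, if_pos h, if_pos (Fin.ext h)]
      field_simp
    · rw [if_neg h, if_neg h, if_neg (fun hc => h (congrArg Fin.val hc))]
      split_ifs <;> ring
  have hdet := congrArg Matrix.det h1
  rw [Matrix.det_mul, det_triT_two] at hdet
  have hcast : ((n - 1 : ℕ) : ℝ) + 1 = (n : ℝ) := by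
    have h1n : 1 ≤ n := by omega
    push_cast [Nat.cast_sub h1n]
    ring
  rw [hcast] at hdet
  rw [dpoly]
  field_simp at hdet ⊢
  linarith [hdet]

lemma sinh_half_le (u : ℝ) (hu0 : 0 ≤ u) (hu : u ≤ 1/2) : Real.sinh (u/2) ≤ u := by
  set z := u / 2 with hz
  have hz0 : 0 ≤ z := by positivity
  have hz1 : z ≤ 1/4 := by rw [hz]; linarith
  have h1 : 1 - z ≤ Real.exp (-z) := by have := Real.add_one_le_exp (-z); linarith
  have h2 : Real.exp z * Real.exp (-z) = 1 := by rw [← Real.exp_add]; simp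
  have h3 : Real.exp z * (1 - z) ≤ 1 := by
    calc Real.exp z * (1 - z) ≤ Real.exp z * Real.exp (-z) :=
      mul_le_mul_of_nonneg_left h1 (Real.exp_pos z).le
    _ = 1 := h2
  rw [Real.sinh_eq]
  nlinarith [Real.exp_pos z, Real.exp_pos (-z)]

/-- For `n >= 11` and `0 < s <= n^2/2`,
`d_n(-2s/n) >= (e^{sqrt(s/2)} - e^{-sqrt(s/2)}) / sqrt(10 s)`. -/
theorem dpoly_ge_sinh (n : ℕ) (hn : 11 ≤ n) (s : ℝ) (hs : 0 < s)
    (hs' : s ≤ (n : ℝ) ^ 2 / 2) :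
    (Real.exp (Real.sqrt (s / 2)) - Real.exp (-Real.sqrt (s / 2))) / Real.sqrt (10 * s)
      ≤ dpoly n (-2 * s / n) := by
  have hn2 : 2 ≤ n := by omega
  have hn0 : (0:ℝ) < n := by exact_mod_cast (by omega : 0 < n)
  set r := Real.sqrt (s / 2) with hr
  have hr0 : 0 < r := Real.sqrt_pos.mpr (by positivity)
  have hr2 : r ^ 2 = s / 2 := Real.sq_sqrt (by positivity)
  set u := r / n with hudef
  have hu0 : 0 < u := div_pos hr0 hn0
  have hu2 : u ^ 2 = s / 2 / (n:ℝ)^2 := by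
    rw [hudef, div_pow, hr2]
  have hu2q : u ^ 2 ≤ 1/4 := by
    rw [hu2]
    rw [div_le_iff₀ (by positivity)]
    nlinarith
  have huhalf : u ≤ 1/2 := by nlinarith
  set y := Real.arsinh u with hy
  have hsinhy : Real.sinh y = u := Real.sinh_arsinh u
  have hy0 : 0 < y := by
    rw [hy, ← Real.arsinh_zero]
    exact Real.arsinh_lt_arsinh.mpr hu0
  set θ := 2 * y with hθ
  have hθ0 : 0 < θ := by positivity
  have hsinhθ : Real.sinh θ = 2 * u * Real.sqrt (1 + u^2) := by
    rw [hθ, Real.sinh_two_mul, hsinhy, Real.cosh_arsinh]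
  have hsinhθ0 : 0 < Real.sinh θ := by positivity
  have hcoshθ : Real.cosh θ = 1 + 2 * u^2 := by
    rw [hθ, Real.cosh_two_mul, hsinhy, Real.cosh_arsinh,
      Real.sq_sqrt (by positivity : (0:ℝ) ≤ 1 + u^2)]
    ring
  -- the value of dpoly
  have ha : 2 - (-2 * s / n) / n = 2 * Real.cosh θ := by
    rw [hcoshθ, hu2]
    field_simp
    ring
  have hval : dpoly n (-2 * s / n) = Real.sinh ((n:ℝ) * θ) / Real.sinh θ / n := by
    rw [dpoly_eq n hn2, ha, det_triT_cosh θ hsinhθ0.ne']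
    have hcast : ((n - 1 : ℕ) : ℝ) + 1 = (n : ℝ) := by
      have h1n : 1 ≤ n := by omega
      push_cast [Nat.cast_sub h1n]
      ring
    rw [hcast]
  rw [hval]
  -- lower bound on n*θ
  have hnθ : r ≤ (n:ℝ) * θ := by
    have h1 : Real.sinh (u/2) ≤ u := sinh_half_le u hu0.le huhalf
    have h2 : u / 2 ≤ y := by
      apply Real.sinh_le_sinh.mp
      rw [hsinhy]
      exact h1
    have : r = (n:ℝ) * u := by rw [hudef]; field_simp
    rw [this, hθ]
    nlinarith
  have hsr : Real.sinh r ≤ Real.sinh ((n:ℝ) * θ) := Real.sinh_le_sinh.mpr hnθ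
  have hsinhr0 : 0 < Real.sinh r := by positivity
  have hsinhnθ0 : 0 < Real.sinh ((n:ℝ) * θ) := lt_of_lt_of_le hsinhr0 hsr
  -- upper bound on 2 n sinh θ
  have hub : 2 * (n:ℝ) * Real.sinh θ ≤ Real.sqrt (10 * s) := by
    rw [hsinhθ]
    have hrn : (n:ℝ) * u = r := by rw [hudef]; field_simp
    have he : 2 * (n:ℝ) * (2 * u * Real.sqrt (1 + u^2)) = 4 * r * Real.sqrt (1 + u^2) := by
      rw [← hrn]; ring
    rw [he]
    rw [show Real.sqrt (10*s) = Real.sqrt (10*s) from rfl]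
    apply (Real.le_sqrt (by positivity) (by positivity)).mpr
    have hsq : (4 * r * Real.sqrt (1 + u^2))^2 = 16 * (s/2) * (1 + u^2) := by
      rw [mul_pow, mul_pow, Real.sq_sqrt (by positivity : (0:ℝ) ≤ 1 + u^2), hr2]
      ring
    rw [hsq]
    nlinarith
  -- final assembly
  have hexp : Real.exp r - Real.exp (-r) = 2 * Real.sinh r := by
    rw [Real.sinh_eq]; ring
  rw [hexp]
  have hrw : Real.sinh ((n:ℝ) * θ) / Real.sinh θ / n
      = (2 * Real.sinh ((n:ℝ) * θ)) / (2 * (n:ℝ) * Real.sinh θ) := by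
    field_simp
  rw [hrw]
  exact div_le_div₀ (by positivity) (by linarith) (by positivity) hub

end
end
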